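/- arXiv:1406.3813 — 3 statements merged into one kernel-verified Lean document; each statement's English description precedes it below -/
import Mathlib

section
/- For a ring R, the following conditions are equivalent: (1) R is a semiregular ring and J(R) = Z_r(R); (2) every finitely generated projective right R-module is a CS-Rickart module which is also a C₂ module. -/
namespace CSRickartPaper

section Defs

variable {R : Type*} [Ring R] {M : Type*} [AddCommGroup M] [Module R M]

/-- `N` is an essential submodule of `P` (inside the ambient module `M`):
`N ≤ P` and every submodule of `P` intersecting `N` trivially is zero. -/
def EssentialIn (N P : Submodule R M) : Prop :=
  N ≤ P ∧ ∀ K : Submodule R M, K ≤ P → N ⊓ K = ⊥ → K = ⊥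

/-- `N` is a small (superfluous) submodule of `P`. -/
def SmallIn (N P : Submodule R M) : Prop :=
  N ≤ P ∧ ∀ K : Submodule R M, K ≤ P → N ⊔ K = P → K = P

/-- `N` is a direct summand of `M`. -/
def IsDirectSummand (N : Submodule R M) : Prop :=
  ∃ K : Submodule R M, IsCompl N K

/-- `N` lies above the direct summand `D` of `M`: `M = D ⊕ K`, `D ≤ N` and
`N ⊓ K` is small in `K`. -/
def LiesAbove (N D : Submodule R M) : Prop :=
  ∃ K : Submodule R M, IsCompl D K ∧ D ≤ N ∧ SmallIn (N ⊓ K) K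

/-- `N` lies above a direct summand of `M`. -/
def LiesAboveSummand (N : Submodule R M) : Prop :=
  ∃ D : Submodule R M, LiesAbove N D

end Defs

section ModuleDefs

variable (R : Type*) [Ring R] (M : Type*) [AddCommGroup M] [Module R M]

/-- `M` is a CS-Rickart module: the kernel of every endomorphism is essential
in a direct summand `eM`, `e` an idempotent endomorphism. -/
def IsCSRickart : Prop :=
  ∀ φ : Module.End R M, ∃ e : Module.End R M, IsIdempotentElem e ∧
    EssentialIn (LinearMap.ker φ) (LinearMap.range e)

/-- `M` is a d-CS-Rickart module: the image of every endomorphism lies above a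
direct summand of `M`. -/
def IsDCSRickart : Prop :=
  ∀ φ : Module.End R M, LiesAboveSummand (LinearMap.range φ)

/-- `M` is a Rickart module. -/
def IsRickart : Prop :=
  ∀ φ : Module.End R M, ∃ e : Module.End R M, IsIdempotentElem e ∧
    LinearMap.ker φ = LinearMap.range e

/-- `M` is a dual Rickart module. -/
def IsDRickart : Prop :=
  ∀ φ : Module.End R M, ∃ e : Module.End R M, IsIdempotentElem e ∧
    LinearMap.range φ = LinearMap.range e

/-- `M` is a CS (extending) module. -/
def IsCSModule : Prop :=
  ∀ N : Submodule R M, ∃ D : Submodule R M, IsDirectSummand D ∧ EssentialIn N D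

/-- `M` is a lifting (d-CS) module. -/
def IsLifting : Prop :=
  ∀ N : Submodule R M, LiesAboveSummand N

/-- `M` is a singular module: the annihilator of every element is an essential
ideal of `R`. -/
def IsSingularModule : Prop :=
  ∀ m : M, EssentialIn (LinearMap.ker (LinearMap.toSpanSingleton R M m)) (⊤ : Submodule R R)

/-- `M` is uniform: every nonzero submodule is essential. -/
def IsUniformModule : Prop :=
  ∀ N : Submodule R M, N ≠ ⊥ → EssentialIn N (⊤ : Submodule R M)

/-- `M` satisfies the C₂ condition: every submodule isomorphic to a direct
summand is itself a direct summand. -/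
def IsC2 : Prop :=
  ∀ N D : Submodule R M, IsDirectSummand D → Nonempty (N ≃ₗ[R] D) → IsDirectSummand N

/-- `M` is K-nonsingular. -/
def IsKNonsingular : Prop :=
  ∀ φ : Module.End R M, ∀ N : Submodule R M, EssentialIn N (⊤ : Submodule R M) →
    N ≤ LinearMap.ker φ → φ = 0

/-- `M` is T-noncosingular. -/
def IsTNoncosingular : Prop :=
  ∀ φ : Module.End R M, φ ≠ 0 → ¬ SmallIn (LinearMap.range φ) (⊤ : Submodule R M)

/-- `M` is an SIP-CS module. -/
def IsSIPCS : Prop :=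
  ∀ A B : Submodule R M, IsDirectSummand A → IsDirectSummand B →
    ∃ D : Submodule R M, IsDirectSummand D ∧ EssentialIn (A ⊓ B) D

/-- `M` is an SSP-d-CS module. -/
def IsSSPdCS : Prop :=
  ∀ A B : Submodule R M, IsDirectSummand A → IsDirectSummand B →
    LiesAboveSummand (A ⊔ B)

end ModuleDefs

section RelDefs

variable (R : Type*) [Ring R] (M N : Type*) [AddCommGroup M] [Module R M]
  [AddCommGroup N] [Module R N]

/-- `M` is relatively CS-Rickart to `N`. -/
def IsRelCSRickart : Prop :=
  ∀ φ : M →ₗ[R] N, ∃ e : Module.End R M, IsIdempotentElem e ∧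
    EssentialIn (LinearMap.ker φ) (LinearMap.range e)

/-- `M` is relatively d-CS-Rickart to `N`. -/
def IsRelDCSRickart : Prop :=
  ∀ φ : M →ₗ[R] N, LiesAboveSummand (LinearMap.range φ)

/-- `N` is `M`-injective. -/
def IsRelInjective : Prop :=
  ∀ (A : Submodule R M) (f : A →ₗ[R] N), ∃ g : M →ₗ[R] N, ∀ a : A, g a = f a

end RelDefs

section RingDefs

variable (R : Type*) [Ring R]

/-- The annihilator of an element `a` of `R`, as an ideal (kernel of `r ↦ r • a`). -/
def annElem (a : R) : Submodule R R :=
  LinearMap.ker (LinearMap.toSpanSingleton R R a)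

/-- The annihilator of a subset `X` of `R`. -/
def annSet (X : Set R) : Submodule R R :=
  ⨅ x ∈ X, annElem R x

/-- The principal ideal generated by `e`, i.e. the image of `r ↦ r • e`. -/
def idealGen (e : R) : Submodule R R :=
  LinearMap.range (LinearMap.toSpanSingleton R R e)

/-- `R` is an ACS ring: the annihilator of every element is essential in a
direct summand `eR` of `R`. -/
def IsACSRing : Prop :=
  ∀ a : R, ∃ e : R, IsIdempotentElem e ∧ EssentialIn (annElem R a) (idealGen R e)

/-- `R` is an essentially Baer ring. -/
def IsEssentiallyBaer : Prop :=
  ∀ X : Set R, X.Nonempty → ∃ e : R, IsIdempotentElem e ∧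
    EssentialIn (annSet R X) (idealGen R e)

/-- The Jacobson radical of the ring `R`. -/
noncomputable def jacRad : Ideal R := Ideal.jacobson (⊥ : Ideal R)

/-- `R` is semiregular: `R/J(R)` is von Neumann regular and idempotents lift
modulo `J(R)` (stated elementwise). -/
def IsSemiregularRing : Prop :=
  (∀ a : R, ∃ b : R, a - a * b * a ∈ jacRad R) ∧
  (∀ a : R, a - a * a ∈ jacRad R →
    ∃ e : R, IsIdempotentElem e ∧ e - a ∈ jacRad R)

/-- `J(R)` coincides with the singular ideal `Z(R)`. -/
def JacEqSingular : Prop :=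
  ∀ a : R, a ∈ jacRad R ↔ EssentialIn (annElem R a) (⊤ : Submodule R R)

end RingDefs

section GenDefs

variable {R : Type*} [Ring R] {M : Type*} [AddCommGroup M] [Module R M]

/-- A submodule is `n`-generated if it is spanned by at most `n` elements. -/
def NGen (n : ℕ) (N : Submodule R M) : Prop :=
  ∃ f : Fin n → M, Submodule.span R (Set.range f) = N

end GenDefs

end CSRickartPaper


namespace CSRickartPaper

section S1

variable {R : Type*} [Ring R] {M : Type*} [AddCommGroup M] [Module R M]

/-- The annihilator of an element of a module. -/
def ann (R : Type*) [Ring R] {M : Type*} [AddCommGroup M] [Module R M] (m : M) :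
    Submodule R R := LinearMap.ker (LinearMap.toSpanSingleton R M m)

lemma mem_ann {m : M} {r : R} : r ∈ ann R m ↔ r • m = 0 := Iff.rfl

/-- An element is singular if its annihilator is essential. -/
def Zel (R : Type*) [Ring R] {M : Type*} [AddCommGroup M] [Module R M] (m : M) : Prop :=
  EssentialIn (ann R m) (⊤ : Submodule R R)

lemma essentialIn_top_iff {N : Submodule R M} :
    EssentialIn N (⊤ : Submodule R M) ↔ ∀ x : M, x ≠ 0 → ∃ r : R, r • x ≠ 0 ∧ r • x ∈ N := by
  constructor
  · rintro ⟨-, h⟩ x hx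
    by_contra hc
    push_neg at hc
    have h0 : N ⊓ Submodule.span R {x} = ⊥ := by
      refine (Submodule.eq_bot_iff _).2 ?_
      rintro y ⟨hyN, hyx⟩
      rcases Submodule.mem_span_singleton.1 hyx with ⟨r, rfl⟩
      by_contra hy0
      exact hy0 (hc r (fun h' => hy0 h') |> fun h'' => absurd hyN h'')
    have := h (Submodule.span R {x}) le_top h0
    exact hx (by simpa [Submodule.span_singleton_eq_bot] using this)
  · intro h
    refine ⟨le_top, fun K _ hNK => ?_⟩
    refine (Submodule.eq_bot_iff _).2 fun x hxK => ?_
    by_contra hx0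
    obtain ⟨r, hr0, hrN⟩ := h x hx0
    have : r • x ∈ N ⊓ K := ⟨hrN, K.smul_mem r hxK⟩
    rw [hNK] at this
    exact hr0 this

lemma essentialIn_top_of_le {N N' : Submodule R M} (h : N ≤ N')
    (hN : EssentialIn N (⊤ : Submodule R M)) : EssentialIn N' (⊤ : Submodule R M) := by
  rw [essentialIn_top_iff] at hN ⊢
  intro x hx
  obtain ⟨r, h1, h2⟩ := hN x hx
  exact ⟨r, h1, h h2⟩

lemma essentialIn_top_inf {N N' : Submodule R M}
    (hN : EssentialIn N (⊤ : Submodule R M)) (hN' : EssentialIn N' (⊤ : Submodule R M)) :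
    EssentialIn (N ⊓ N') (⊤ : Submodule R M) := by
  rw [essentialIn_top_iff] at hN hN' ⊢
  intro x hx
  obtain ⟨r, h1, h2⟩ := hN x hx
  obtain ⟨s, h3, h4⟩ := hN' (r • x) h1
  rw [smul_smul] at h3 h4
  exact ⟨s * r, h3, ⟨by rw [← smul_smul]; exact N.smul_mem s h2, h4⟩⟩

lemma essentialIn_top_top : EssentialIn (⊤ : Submodule R M) (⊤ : Submodule R M) :=
  ⟨le_rfl, fun K _ h => by simpa using h⟩

/-- Pulling back an essential left ideal along right multiplication. -/
lemma essentialIn_comap_mul {I : Submodule R R} (hI : EssentialIn I (⊤ : Submodule R R))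
    (s : R) : EssentialIn (Submodule.comap (LinearMap.toSpanSingleton R R s) I)
      (⊤ : Submodule R R) := by
  rw [essentialIn_top_iff] at hI ⊢
  intro x hx
  by_cases hxs : x * s = 0
  · exact ⟨1, by simpa using hx, by simp [Submodule.mem_comap, mem_ann, smul_eq_mul, hxs]⟩
  · obtain ⟨t, h1, h2⟩ := hI (x * s) hxs
    rw [smul_eq_mul] at h1 h2
    refine ⟨t, ?_, ?_⟩
    · intro h
      apply h1
      rw [smul_eq_mul] at h
      rw [← mul_assoc, h, zero_mul]
    · simp only [Submodule.mem_comap, smul_eq_mul, LinearMap.toSpanSingleton_apply]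
      rwa [mul_assoc]

lemma zel_zero : Zel R (0 : M) := by
  have : ann R (0 : M) = ⊤ := by
    ext r; simp [mem_ann]
  rw [Zel, this]; exact essentialIn_top_top

lemma zel_of_ann_le {M' : Type*} [AddCommGroup M'] [Module R M'] {m : M} {m' : M'}
    (h : ∀ r : R, r • m = 0 → r • m' = 0) (hm : Zel R m) : Zel R m' :=
  essentialIn_top_of_le (fun r hr => h r hr) hm

lemma zel_map {M' : Type*} [AddCommGroup M'] [Module R M'] (f : M →ₗ[R] M') {m : M}
    (hm : Zel R m) : Zel R (f m) :=
  zel_of_ann_le (fun r hr => by rw [← map_smul, hr, map_zero]) hm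

lemma zel_add {m m' : M} (h : Zel R m) (h' : Zel R m') : Zel R (m + m') := by
  have := essentialIn_top_inf h h'
  refine essentialIn_top_of_le ?_ this
  intro r hr
  rw [Submodule.mem_inf] at hr
  have h1 : r • m = 0 := hr.1
  have h2 : r • m' = 0 := hr.2
  show r • (m + m') = 0
  rw [smul_add, h1, h2, add_zero]

lemma zel_smul {m : M} (s : R) (h : Zel R m) : Zel R (s • m) := by
  have h2 := essentialIn_comap_mul h s
  refine essentialIn_top_of_le ?_ h2
  intro r hr
  have hr' : (r • s) • m = 0 := hr
  show r • s • m = 0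
  rw [smul_smul]
  rwa [smul_eq_mul] at hr' 

lemma zel_pair {M₁ M₂ : Type*} [AddCommGroup M₁] [Module R M₁] [AddCommGroup M₂] [Module R M₂]
    {m₁ : M₁} {m₂ : M₂} (h1 : Zel R m₁) (h2 : Zel R m₂) : Zel R ((m₁, m₂) : M₁ × M₂) := by
  have := essentialIn_top_inf h1 h2
  refine essentialIn_top_of_le ?_ this
  intro r hr
  rw [Submodule.mem_inf] at hr
  have ha : r • m₁ = 0 := hr.1
  have hb : r • m₂ = 0 := hr.2
  show r • ((m₁, m₂) : M₁ × M₂) = 0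
  rw [Prod.smul_mk, ha, hb]
  rfl

end S1

section S2

variable {R : Type*} [Ring R]

lemma jac_mem_iff {a : R} : a ∈ jacRad R ↔ ∀ y : R, ∃ z : R, z * (y * a) + z = 1 := by
  rw [jacRad, Ideal.mem_jacobson_iff]
  constructor
  · intro h y
    obtain ⟨z, hz⟩ := h y
    refine ⟨z, ?_⟩
    have : z * y * a + z - 1 = 0 := hz
    rw [sub_eq_zero] at this
    rw [← mul_assoc]
    exact this
  · intro h y
    obtain ⟨z, hz⟩ := h y
    refine ⟨z, ?_⟩
    show z * y * a + z - 1 = 0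
    rw [sub_eq_zero, mul_assoc]
    exact hz

lemma jac_left_inv {a : R} (ha : a ∈ jacRad R) : ∃ z : R, z * (1 + a) = 1 := by
  obtain ⟨z, hz⟩ := jac_mem_iff.1 ha 1
  refine ⟨z, ?_⟩
  rw [one_mul] at hz
  rw [mul_add, mul_one, add_comm]
  exact hz

lemma jac_unit {a : R} (ha : a ∈ jacRad R) : ∃ z : R, z * (1 + a) = 1 ∧ (1 + a) * z = 1 := by
  obtain ⟨z, hz⟩ := jac_left_inv ha
  have hz' : z = 1 + -(z * a) := by
    have h0 : z * 1 + z * a = 1 := by rw [← mul_add]; exact hz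
    rw [mul_one] at h0
    have h1 := eq_sub_of_add_eq h0
    rw [sub_eq_add_neg] at h1
    exact h1
  have hmem : -(z * a) ∈ jacRad R := neg_mem (Ideal.mul_mem_left _ z ha)
  obtain ⟨w, hw⟩ := jac_left_inv hmem
  rw [← hz'] at hw
  -- hw : w * z = 1, hz : z * (1+a) = 1
  have h1 : w = 1 + a := by
    calc w = w * (z * (1 + a)) := by rw [hz, mul_one]
    _ = (w * z) * (1 + a) := by rw [mul_assoc]
    _ = 1 + a := by rw [hw, one_mul]
  exact ⟨z, hz, by rw [← h1]; exact hw⟩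

lemma jac_mul_right {a : R} (ha : a ∈ jacRad R) (b : R) : a * b ∈ jacRad R := by
  rw [jac_mem_iff]
  intro y
  set c := y * a with hc
  have hcJ : c ∈ jacRad R := Ideal.mul_mem_left _ y ha
  have hbcJ : b * c ∈ jacRad R := Ideal.mul_mem_left _ b hcJ
  obtain ⟨w, hw1, hw2⟩ := jac_unit hbcJ
  refine ⟨1 - c * w * b, ?_⟩
  have hwbc : w * (b * c) = 1 - w := by
    have h0 : w * 1 + w * (b * c) = 1 := by rw [← mul_add]; exact hw1
    rw [mul_one] at h0
    rw [add_comm] at h0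
    exact eq_sub_of_add_eq h0
  have key : (1 - c * w * b) * (1 + c * b) = 1 := by
    have expand : (1 - c * w * b) * (1 + c * b)
        = 1 + c * b - c * w * b - c * (w * (b * c)) * b := by noncomm_ring
    rw [expand, hwbc]
    noncomm_ring
  have hyab : y * (a * b) = c * b := by rw [hc, mul_assoc]
  rw [hyab]
  have : (1 - c * w * b) * (c * b) + (1 - c * w * b) = (1 - c * w * b) * (1 + c * b) := by
    noncomm_ring
  rw [this, key]

lemma jac_idem_eq_zero {g : R} (hg : g ∈ jacRad R) (hidem : g * g = g) : g = 0 := by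
  obtain ⟨z, hz⟩ := jac_left_inv (neg_mem hg)
  have h1 : z * (1 - g) = 1 := by
    rw [sub_eq_add_neg]
    exact hz
  calc g = (z * (1 - g)) * g := by rw [h1, one_mul]
  _ = z * (g - g * g) := by noncomm_ring
  _ = 0 := by rw [hidem, sub_self, mul_zero]

end S2

end CSRickartPaper


namespace CSRickartPaper

section S3

variable {R : Type u_1} [Ring R]

lemma annElem_eq_ann (a : R) : annElem R a = ann R a := rfl

lemma zel_neg {M : Type u_2} [AddCommGroup M] [Module R M] {m : M} (h : Zel R m) :
    Zel R (-m) :=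
  zel_of_ann_le (fun r hr => by rw [smul_neg, hr, neg_zero]) h

lemma zel_mul_right {z : R} (hz : Zel R z) (c : R) : Zel R (z * c) :=
  zel_of_ann_le (fun r hr => by
    rw [smul_eq_mul] at hr ⊢
    rw [← mul_assoc, hr, zero_mul]) hz

lemma end_apply (φ : Module.End R R) (x : R) : φ x = x * φ 1 := by
  conv_lhs => rw [← mul_one x, ← smul_eq_mul, map_smul, smul_eq_mul]

lemma mem_idealGen {e x : R} : x ∈ idealGen R e ↔ ∃ r : R, r * e = x := by
  simp only [idealGen, LinearMap.mem_range, LinearMap.toSpanSingleton_apply, smul_eq_mul]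

/-- From a direct summand left ideal, extract an idempotent generator. -/
lemma summand_idem {N : Submodule R R} (h : IsDirectSummand N) :
    ∃ x : R, x * x = x ∧ x ∈ N ∧ ∀ u ∈ N, u = u * x := by
  obtain ⟨K, hK⟩ := h
  have h1 : (1 : R) ∈ N ⊔ K := by rw [hK.sup_eq_top]; trivial
  obtain ⟨x, hx, y, hy, hxy⟩ := Submodule.mem_sup.1 h1
  have key : ∀ u ∈ N, u = u * x := by
    intro u hu
    have h2 : u * x ∈ N := by rw [← smul_eq_mul]; exact N.smul_mem u hx
    have h3 : u * y ∈ K := by rw [← smul_eq_mul]; exact K.smul_mem u hy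
    have h4 : u * y = u - u * x := by
      have h5 : u * x + u * y = u := by rw [← mul_add, hxy, mul_one]
      exact eq_sub_of_add_eq' h5
    have h5 : u * y ∈ N := by rw [h4]; exact N.sub_mem hu h2
    have h6 : u * y = 0 := by
      have h7 : u * y ∈ N ⊓ K := ⟨h5, h3⟩
      rwa [disjoint_iff.1 hK.disjoint, Submodule.mem_bot] at h7
    rw [h6] at h4
    exact sub_eq_zero.1 h4.symm
  exact ⟨x, (key x hx).symm, hx, key⟩

/-- C2 implies that `1 - z` is left invertible for every singular `z`. -/
lemma one_sub_left_inv_of_zel (hC2 : IsC2 R R) {z : R} (hz : Zel R z) :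
    ∃ t : R, t * (1 - z) = 1 := by
  have hlann : ∀ y : R, y * (1 - z) = 0 → y = 0 := by
    intro y hy
    by_contra hy0
    obtain ⟨r, hr0, hrz⟩ := essentialIn_top_iff.1 hz y hy0
    rw [smul_eq_mul] at hr0
    have h1 : r * y * z = 0 := by
      have h1' : (r • y) • z = 0 := hrz
      rwa [smul_eq_mul, smul_eq_mul] at h1'
    have h2 : y = y * z := by
      rw [mul_one_sub] at hy
      exact (sub_eq_zero.1 hy)
    apply hr0
    calc r * y = r * (y * z) := by rw [← h2]
    _ = r * y * z := by rw [mul_assoc]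
    _ = 0 := h1
  set μ := LinearMap.toSpanSingleton R R (1 - z) with hμ
  have hker : LinearMap.ker μ = ⊥ := by
    rw [Submodule.eq_bot_iff]
    intro x hxk
    have : x * (1 - z) = 0 := by
      rw [LinearMap.mem_ker, hμ, LinearMap.toSpanSingleton_apply, smul_eq_mul] at hxk
      exact hxk
    exact hlann x this
  have hinj : Function.Injective μ := LinearMap.ker_eq_bot.1 hker
  set N := LinearMap.range μ with hN
  have isoN : Nonempty ((↥N) ≃ₗ[R] ↥(⊤ : Submodule R R)) :=
    ⟨(LinearEquiv.ofInjective μ hinj).symm.trans (Submodule.topEquiv.symm)⟩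
  have hDS : IsDirectSummand N :=
    hC2 N ⊤ ⟨⊥, isCompl_top_bot⟩ isoN
  obtain ⟨x, hxx, hxN, hfix⟩ := summand_idem hDS
  have h1zN : (1 - z) ∈ N := ⟨1, by rw [hμ, LinearMap.toSpanSingleton_apply, one_smul]⟩
  have h1z : (1 - z) = (1 - z) * x := hfix _ h1zN
  have h1x : 1 - x = z * (1 - x) := by
    have h0 : (1 - z) * (1 - x) = 0 := by
      rw [mul_one_sub, ← h1z, sub_self]
    have h0' : (1 - x) - z * (1 - x) = 0 := by
      rw [← h0]; noncomm_ring
    exact (sub_eq_zero.1 h0')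
  have hzel1x : Zel R (1 - x) := by
    rw [h1x]
    refine zel_of_ann_le ?_ hz
    intro r hr
    rw [smul_eq_mul] at hr ⊢
    rw [← mul_assoc, hr, zero_mul]
  have hx1 : (1 : R) - x = 0 := by
    by_contra h0
    obtain ⟨r, hr0, hrm⟩ := essentialIn_top_iff.1 hzel1x (1 - x) h0
    rw [smul_eq_mul] at hr0
    have h1 : r * (1 - x) * (1 - x) = 0 := by
      have h1' : (r • (1 - x)) • (1 - x) = 0 := hrm
      rwa [smul_eq_mul, smul_eq_mul] at h1'
    have h2 : (1 - x) * (1 - x) = 1 - x := by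
      have h2' : (1 - x) * (1 - x) = 1 - x - x + x * x := by noncomm_ring
      rw [h2', hxx]; abel
    apply hr0
    calc r * (1 - x) = r * ((1 - x) * (1 - x)) := by rw [h2]
    _ = r * (1 - x) * (1 - x) := by rw [mul_assoc]
    _ = 0 := h1
  have hx1' : x = 1 := by
    have := sub_eq_zero.1 hx1
    exact this.symm
  rw [hx1'] at hxN
  obtain ⟨t, ht⟩ := hxN
  refine ⟨t, ?_⟩
  rw [hμ, LinearMap.toSpanSingleton_apply, smul_eq_mul] at ht
  exact ht

lemma zel_mem_jac (hC2 : IsC2 R R) {z : R} (hz : Zel R z) : z ∈ jacRad R := by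
  rw [jac_mem_iff]
  intro y
  have h1 : Zel R (y * z) := by
    have := zel_smul y hz
    rwa [smul_eq_mul] at this
  have h2 : Zel R (-(y * z)) := zel_neg h1
  obtain ⟨t, ht⟩ := one_sub_left_inv_of_zel hC2 h2
  rw [sub_neg_eq_add] at ht
  refine ⟨t, ?_⟩
  rw [mul_add, mul_one] at ht
  rw [add_comm] at ht
  exact ht

lemma csr_decomp (hCS : IsCSRickart R R) (hC2 : IsC2 R R) (a : R) :
    ∃ f g d : R, f * f = f ∧ g * g = g ∧ g = d * a ∧ Zel R (f * a) ∧
      ((1 - f) * a) * g = (1 - f) * a := by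
  obtain ⟨e, he, hess⟩ := hCS (LinearMap.toSpanSingleton R R a)
  set f := e 1 with hf
  have hef : ∀ x, e x = x * f := fun x => end_apply e x
  have hff : f * f = f := by
    have h0 : (e * e) 1 = e 1 := by rw [he]
    rw [Module.End.mul_apply, hef (e 1), ← hf] at h0
    exact h0
  have hess' : EssentialIn (ann R a) (LinearMap.range e) := hess
  have hrange : ∀ y : R, y ∈ LinearMap.range e ↔ ∃ x : R, x * f = y := by
    intro y
    constructor
    · rintro ⟨x, rfl⟩; exact ⟨x, (hef x).symm⟩
    · rintro ⟨x, rfl⟩; exact ⟨x, hef x⟩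
  -- (a) f * a is singular
  have hZfa : Zel R (f * a) := by
    rw [Zel, essentialIn_top_iff]
    intro s hs
    by_cases hsf : s * f = 0
    · refine ⟨1, by simpa using hs, ?_⟩
      rw [mem_ann, one_smul, smul_eq_mul, ← mul_assoc, hsf, zero_mul]
    · have hKle : Submodule.span R {s * f} ≤ LinearMap.range e := by
        rw [Submodule.span_le, Set.singleton_subset_iff]
        exact (hrange _).2 ⟨s, rfl⟩
      have hKne : Submodule.span R {s * f} ≠ ⊥ := by
        intro h0
        exact hsf (Submodule.span_eq_bot.1 h0 _ (Set.mem_singleton _))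
      have hne : ann R a ⊓ Submodule.span R {s * f} ≠ ⊥ := by
        intro h0
        exact hKne (hess'.2 _ hKle h0)
      obtain ⟨y, hy, hy0⟩ := Submodule.exists_mem_ne_zero_of_ne_bot hne
      obtain ⟨hya, hyK⟩ := hy
      obtain ⟨r, hr⟩ := Submodule.mem_span_singleton.1 hyK
      rw [smul_eq_mul] at hr
      refine ⟨r, ?_, ?_⟩
      · rw [smul_eq_mul]
        intro h0
        apply hy0
        rw [← hr, ← mul_assoc, h0, zero_mul]
      · rw [mem_ann, smul_eq_mul, smul_eq_mul, ← mul_assoc, mul_assoc r s f, hr]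
        have h8 : y • a = 0 := hya
        rwa [smul_eq_mul] at h8
  -- (b) right multiplication by a is injective on R(1-f)
  have hinj : ∀ r : R, (r * (1 - f)) * a = 0 → r * (1 - f) = 0 := by
    intro r h0
    set u := r * (1 - f) with hu
    have huann : u ∈ ann R a := by rw [mem_ann, smul_eq_mul]; exact h0
    obtain ⟨v, hv⟩ := (hrange u).1 (hess'.1 huann)
    have h1 : u * f = 0 := by
      rw [hu, mul_assoc, one_sub_mul, hff, sub_self, mul_zero]
    have h2 : u * f = u := by
      rw [← hv, mul_assoc, hff]
    rw [h2] at h1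
    exact h1
  -- (c) complementary ideals
  have hcompl : IsCompl (idealGen R (1 - f)) (idealGen R f) := by
    constructor
    · rw [Submodule.disjoint_def]
      intro x hx1 hx2
      obtain ⟨s, hs⟩ := mem_idealGen.1 hx1
      obtain ⟨t, ht⟩ := mem_idealGen.1 hx2
      have h1 : x * f = 0 := by
        rw [← hs, mul_assoc, one_sub_mul, hff, sub_self, mul_zero]
      have h2 : x * f = x := by rw [← ht, mul_assoc, hff]
      rw [h2] at h1
      exact h1
    · rw [codisjoint_iff, eq_top_iff]
      intro x _
      have : x = x * (1 - f) + x * f := by noncomm_ring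
      rw [this]
      exact Submodule.add_mem_sup (mem_idealGen.2 ⟨x, rfl⟩) (mem_idealGen.2 ⟨x, rfl⟩)
  -- (d) the image ideal
  set ν : ↥(idealGen R (1 - f)) →ₗ[R] R :=
    (LinearMap.toSpanSingleton R R a).comp (Submodule.subtype _) with hν
  have hνinj : Function.Injective ν := by
    rw [← LinearMap.ker_eq_bot, Submodule.eq_bot_iff]
    intro x hxk
    have h0 : (↑x : R) * a = 0 := by
      have := hxk
      rw [LinearMap.mem_ker, hν, LinearMap.comp_apply, Submodule.subtype_apply,
        LinearMap.toSpanSingleton_apply, smul_eq_mul] at this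
      exact this
    obtain ⟨r, hr⟩ := mem_idealGen.1 x.2
    have : (↑x : R) = 0 := by
      rw [← hr] at h0 ⊢
      exact hinj r h0
    exact Subtype.ext this
  set N := LinearMap.range ν with hNdef
  have hDS : IsDirectSummand N :=
    hC2 N (idealGen R (1 - f)) ⟨idealGen R f, hcompl⟩
      ⟨(LinearEquiv.ofInjective ν hνinj).symm⟩
  obtain ⟨g, hgg, hgN, hfix⟩ := summand_idem hDS
  obtain ⟨w, hw⟩ := hgN
  obtain ⟨c, hc⟩ := mem_idealGen.1 w.2
  have hgd : g = (c * (1 - f)) * a := by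
    rw [← hw, hν, LinearMap.comp_apply, Submodule.subtype_apply,
      LinearMap.toSpanSingleton_apply, smul_eq_mul, hc]
  have ha'N : (1 - f) * a ∈ N := by
    refine ⟨⟨1 - f, mem_idealGen.2 ⟨1, one_mul _⟩⟩, ?_⟩
    rw [hν, LinearMap.comp_apply, Submodule.subtype_apply,
      LinearMap.toSpanSingleton_apply, smul_eq_mul]
  have hfix' : ((1 - f) * a) * g = (1 - f) * a := (hfix _ ha'N).symm
  exact ⟨f, g, c * (1 - f), hff, hgg, by rw [hgd, mul_assoc], hZfa, hfix'⟩

theorem backward_direction (hCS : IsCSRickart R R) (hC2 : IsC2 R R) :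
    IsSemiregularRing R ∧ JacEqSingular R := by
  have hZJ : ∀ z : R, Zel R z → z ∈ jacRad R := fun z hz => zel_mem_jac hC2 hz
  have hJZ : JacEqSingular R := by
    intro a
    constructor
    · intro ha
      obtain ⟨f, g, d, hff, hgg, hgd, hZfa, hfix⟩ := csr_decomp hCS hC2 a
      have hgJ : g ∈ jacRad R := by
        rw [hgd]
        exact Ideal.mul_mem_left _ d ha
      have hg0 : g = 0 := jac_idem_eq_zero hgJ hgg
      have ha' : (1 - f) * a = 0 := by rw [← hfix, hg0, mul_zero]
      have haf : a = f * a := by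
        rw [one_sub_mul] at ha'
        exact sub_eq_zero.1 ha'
      show EssentialIn (annElem R a) ⊤
      rw [annElem_eq_ann]
      rw [haf]
      exact hZfa
    · intro h
      exact hZJ a h
  refine ⟨⟨?_, ?_⟩, hJZ⟩
  · intro a
    obtain ⟨f, g, d, hff, hgg, hgd, hZfa, hfix⟩ := csr_decomp hCS hC2 a
    refine ⟨d, ?_⟩
    have h1 : ((1 - f) * a) * (d * a) = (1 - f) * a := by rw [← hgd]; exact hfix
    have key : a - a * d * a = (f * a) * (1 - d * a) := by
      have h2 : a * (d * a) = (f * a) * (d * a) + ((1 - f) * a) * (d * a) := by noncomm_ring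
      rw [h1] at h2
      have h3 : a - a * d * a = a - a * (d * a) := by rw [mul_assoc]
      rw [h3, h2]
      noncomm_ring
    rw [key]
    exact hZJ _ (zel_mul_right hZfa _)
  · intro a ha2
    obtain ⟨f, g, d, hff, hgg, hgd, hZfa, hfix⟩ := csr_decomp hCS hC2 a
    have haag : a - a * g ∈ jacRad R := by
      have h1 : a * g = (f * a) * g + ((1 - f) * a) * g := by noncomm_ring
      rw [hfix] at h1
      have h2 : a - a * g = (f * a) * (1 - g) - ((1 - f) * a - (1 - f) * a) := by
        rw [h1]; noncomm_ring
      rw [sub_self, sub_zero] at h2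
      rw [h2]
      exact hZJ _ (zel_mul_right hZfa _)
    have hga : g * a - g ∈ jacRad R := by
      rw [hgd]
      have h3 : d * a * a - d * a = d * (a * a - a) := by noncomm_ring
      rw [h3]
      have : a * a - a ∈ jacRad R := by
        have := neg_mem ha2
        rwa [neg_sub] at this
      exact Ideal.mul_mem_left _ d this
    set v := (1 - g) * a * g with hv
    have hgv : g * v = 0 := by
      rw [hv]
      have : g * ((1 - g) * a * g) = (g * (1 - g)) * (a * g) := by noncomm_ring
      rw [this, mul_one_sub, hgg, sub_self, zero_mul]
    have hvg : v * g = v := by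
      rw [hv]
      rw [mul_assoc ((1-g)*a) g g, hgg]
    have hvv : v * v = 0 := by
      rw [hv]
      have : ((1 - g) * a * g) * ((1 - g) * a * g)
          = ((1 - g) * a) * (g * (1 - g)) * (a * g) := by noncomm_ring
      rw [this, mul_one_sub, hgg, sub_self, mul_zero, zero_mul]
    refine ⟨g + v, ?_, ?_⟩
    · show (g + v) * (g + v) = g + v
      have : (g + v) * (g + v) = g * g + g * v + (v * g + v * v) := by noncomm_ring
      rw [this, hgg, hgv, hvg, hvv, add_zero, add_zero]
    · have hsplit : (g + v) - a = (g - g * a * g) + (a * g - a) := by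
        rw [hv]; noncomm_ring
      rw [hsplit]
      refine add_mem ?_ ?_
      · have h4 : g - g * a * g = (g - g * a) * g := by
          have h4' : (g - g * a) * g = g * g - g * a * g := by noncomm_ring
          rw [h4', hgg]
        rw [h4]
        have h5 : g - g * a ∈ jacRad R := by
          have := neg_mem hga
          rwa [neg_sub] at this
        exact jac_mul_right h5 g
      · have h6 : a * g - a ∈ jacRad R := by
          have := neg_mem haag
          rwa [neg_sub] at this
        exact h6

end S3

end CSRickartPaper


namespace CSRickartPaper

section S4

variable {R : Type u_1} [Ring R]

/-- Nicholson's characterization: in a semiregular ring, every element `a`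
admits an idempotent `e ∈ Ra` with `a - a*e ∈ J`. -/
lemma semiregular_star (hsr : IsSemiregularRing R) (a : R) :
    ∃ e c : R, e * e = e ∧ e = c * a ∧ a - a * e ∈ jacRad R := by
  obtain ⟨b, hb⟩ := hsr.1 a
  set x := b * a with hx
  have hxx : x - x * x ∈ jacRad R := by
    have h1 : x - x * x = b * (a - a * b * a) := by rw [hx]; noncomm_ring
    rw [h1]
    exact Ideal.mul_mem_left _ b hb
  obtain ⟨h, hhh, hhx⟩ := hsr.2 x hxx
  -- hhh : h * h = h  (IsIdempotentElem), hhx : h - x ∈ J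
  have hhh' : h * h = h := hhh
  set j := x - h with hj
  have hjJ : j ∈ jacRad R := by
    have := neg_mem hhx
    rwa [neg_sub] at this
  set u := h * x + (1 - h) * (1 - x) with hu
  have huJ : u - 1 ∈ jacRad R := by
    have key : u - 1 = h * j - j * x + (x * x - x) + (h * h - h) := by
      rw [hu, hj]; noncomm_ring
    rw [key, hhh', sub_self, add_zero]
    refine add_mem (sub_mem ?_ ?_) ?_
    · exact Ideal.mul_mem_left _ h hjJ
    · exact jac_mul_right hjJ x
    · have := neg_mem hxx
      rwa [neg_sub] at this
  obtain ⟨w, hw1, hw2⟩ := jac_unit huJ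
  have hw1' : w * u = 1 := by
    have : (1 : R) + (u - 1) = u := by abel
    rwa [this] at hw1
  have hw2' : u * w = 1 := by
    have : (1 : R) + (u - 1) = u := by abel
    rwa [this] at hw2
  have hhu : h * u = h * x := by
    have h1 : h * u = h * h * x + (h * (1 - h)) * (1 - x) := by rw [hu]; noncomm_ring
    have h2 : h * (1 - h) = 0 := by rw [mul_one_sub, hhh', sub_self]
    rw [h2, zero_mul, add_zero, hhh'] at h1
    exact h1
  refine ⟨w * h * u, w * h * b, ?_, ?_, ?_⟩
  · -- idempotent
    have h9 : (w * h * u) * (w * h * u) = w * (h * ((u * w) * h)) * u := by noncomm_ring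
    rw [h9, hw2', one_mul, hhh']
  · have h10 : w * h * u = w * (h * u) := by rw [mul_assoc]
    rw [h10, hhu, hx]
    noncomm_ring
  · -- a - a * (w*h*u) ∈ J
    have heh : w * h * u - h ∈ jacRad R := by
      have h1 : w * h * u - h = w * (h * u - u * h) := by
        have h2 : h = w * (u * h) := by rw [← mul_assoc, hw1', one_mul]
        calc w * h * u - h = w * (h * u) - w * (u * h) := by
              rw [← h2, mul_assoc]
        _ = w * (h * u - u * h) := by rw [mul_sub]
      have h3 : h * u - u * h = h * j + j * h - 2 * (h * j * h) + 2 * ((h * h - h) * j) := by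
        rw [hu, hj]; noncomm_ring
      rw [h1, h3, hhh', sub_self, zero_mul, mul_zero, add_zero]
      refine Ideal.mul_mem_left _ w (sub_mem (add_mem ?_ ?_) ?_)
      · exact Ideal.mul_mem_left _ h hjJ
      · exact jac_mul_right hjJ h
      · have h7 : h * j * h ∈ jacRad R := jac_mul_right (Ideal.mul_mem_left _ h hjJ) h
        exact Ideal.mul_mem_left _ 2 h7
    have hex : w * h * u - x ∈ jacRad R := by
      have : w * h * u - x = (w * h * u - h) + (h - x) := by abel
      rw [this]
      exact add_mem heh hhx
    have key : a - a * (w * h * u) = (a - a * x) - a * (w * h * u - x) := by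
      noncomm_ring
    rw [key]
    refine sub_mem ?_ (Ideal.mul_mem_left _ a hex)
    have : a - a * x = a - a * b * a := by rw [hx, mul_assoc]
    rw [this]
    exact hb

end S4

end CSRickartPaper


namespace CSRickartPaper

section S5
universe w

variable {R : Type w} [Ring R]

lemma idem_fix {M : Type*} [AddCommGroup M] [Module R M] {p : Module.End R M}
    (hp : IsIdempotentElem p) {x : M} (hx : x ∈ LinearMap.range p) : p x = x := by
  obtain ⟨y, rfl⟩ := hx
  calc p (p y) = (p * p) y := rfl
  _ = p y := by rw [hp]

lemma idem_one_sub_apply {M : Type*} [AddCommGroup M] [Module R M] (p : Module.End R M)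
    (x : M) : (1 - p) x = x - p x := rfl

lemma mem_range_one_sub_idem {M : Type*} [AddCommGroup M] [Module R M] {p : Module.End R M}
    (hp : IsIdempotentElem p) {x : M} :
    x ∈ LinearMap.range (1 - p) ↔ p x = 0 := by
  constructor
  · rintro ⟨y, rfl⟩
    have h1 : p ((1 - p) y) = p y - p (p y) := by
      rw [idem_one_sub_apply, map_sub]
    rw [h1]
    have : p (p y) = p y := idem_fix hp ⟨y, rfl⟩
    rw [this, sub_self]
  · intro h
    exact ⟨x, by rw [idem_one_sub_apply, h, sub_zero]⟩

lemma isCompl_range_ker_idem {M : Type*} [AddCommGroup M] [Module R M] {p : Module.End R M}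
    (hp : IsIdempotentElem p) : IsCompl (LinearMap.range p) (LinearMap.ker p) := by
  constructor
  · rw [Submodule.disjoint_def]
    intro x hx hk
    rw [LinearMap.mem_ker] at hk
    rw [← idem_fix hp hx, hk]
  · rw [codisjoint_iff, eq_top_iff]
    intro x _
    have hx : x = p x + (x - p x) := by abel
    rw [hx]
    refine Submodule.add_mem_sup ⟨x, rfl⟩ ?_
    rw [LinearMap.mem_ker, map_sub]
    have : p (p x) = p x := idem_fix hp ⟨x, rfl⟩
    rw [this, sub_self]

/-- Module `M` has the elementwise projectivity/semiregularity property. -/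
def HasEP (R : Type w) [Ring R] (M : Type w) [AddCommGroup M] [Module R M] : Prop :=
  ∀ m : M, ∃ p : Module.End R M, IsIdempotentElem p ∧
    LinearMap.range p ≤ Submodule.span R {m} ∧ Zel R (m - p m)

/-- Maps out of `M` with singular image have essential kernel (in cyclic form). -/
def IsKNdom (R : Type w) [Ring R] (M : Type w) [AddCommGroup M] [Module R M] : Prop :=
  ∀ (M' : Type w) [AddCommGroup M'] [Module R M'], ∀ f : M →ₗ[R] M',
    (∀ x : M, Zel R (f x)) → ∀ m : M, m ≠ 0 → ∃ r : R, r • m ≠ 0 ∧ f (r • m) = 0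

lemma hasEP_ring (hsr : IsSemiregularRing R) (hJZ : JacEqSingular R) : HasEP R R := by
  intro a
  obtain ⟨e, c, hee, hec, haJ⟩ := semiregular_star hsr a
  refine ⟨LinearMap.toSpanSingleton R R e, ?_, ?_, ?_⟩
  · apply LinearMap.ext
    intro x
    show (x • e) • e = x • e
    rw [smul_eq_mul, smul_eq_mul, mul_assoc, hee]
  · rintro y ⟨x, rfl⟩
    rw [Submodule.mem_span_singleton]
    refine ⟨x * c, ?_⟩
    show (x * c) • a = x • e
    rw [smul_eq_mul, smul_eq_mul, hec, mul_assoc]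
  · have h1 : a - a • e = a - a * e := by rw [smul_eq_mul]
    show Zel R (a - a • e)
    rw [h1]
    exact (hJZ _).1 haJ

lemma kn_ring : IsKNdom R R := by
  intro M' _ _ f hZ m hm
  have hz1 : Zel R (f 1) := hZ 1
  obtain ⟨r, hr0, hrann⟩ := essentialIn_top_iff.1 hz1 m hm
  refine ⟨r, hr0, ?_⟩
  have h1 : f (r • m) = (r • m) • f 1 := by
    have h2 : (r • m : R) • f 1 = f ((r • m) • (1:R)) := by rw [map_smul]
    rw [h2, smul_eq_mul, smul_eq_mul, mul_one]
  rw [h1]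
  exact hrann

lemma kn_split {M P : Type w} [AddCommGroup M] [Module R M] [AddCommGroup P] [Module R P]
    (ι : P →ₗ[R] M) (π : M →ₗ[R] P) (hπι : ∀ x, π (ι x) = x) (hM : IsKNdom R M) :
    IsKNdom R P := by
  intro M' _ _ f hZ m hm
  have hιm : ι m ≠ 0 := by
    intro h0
    apply hm
    rw [← hπι m, h0, map_zero]
  obtain ⟨r, hr0, hr⟩ := hM M' (f ∘ₗ π) (fun x => hZ (π x)) (ι m) hιm
  refine ⟨r, ?_, ?_⟩
  · intro h0
    apply hr0
    rw [← map_smul, h0, map_zero]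
  · rw [LinearMap.comp_apply, ← map_smul, hπι] at hr
    exact hr

lemma hasEP_split {M P : Type w} [AddCommGroup M] [Module R M] [AddCommGroup P] [Module R P]
    (ι : P →ₗ[R] M) (π : M →ₗ[R] P) (hπι : ∀ x, π (ι x) = x) (hM : HasEP R M) :
    HasEP R P := by
  intro m
  obtain ⟨p, hp, hple, hpz⟩ := hM (ι m)
  have hfix : ∀ y : M, ι (π (p y)) = p y := by
    intro y
    obtain ⟨r, hr⟩ := Submodule.mem_span_singleton.1 (hple ⟨y, rfl⟩)
    rw [← hr, ← map_smul, hπι, map_smul]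
  refine ⟨π ∘ₗ p ∘ₗ ι, ?_, ?_, ?_⟩
  · apply LinearMap.ext
    intro x
    show π (p (ι (π (p (ι x))))) = π (p (ι x))
    rw [hfix (ι x)]
    congr 1
    exact idem_fix hp ⟨ι x, rfl⟩
  · rintro y ⟨x, rfl⟩
    obtain ⟨r, hr⟩ := Submodule.mem_span_singleton.1 (hple ⟨ι x, rfl⟩)
    rw [Submodule.mem_span_singleton]
    refine ⟨r, ?_⟩
    show r • m = π (p (ι x))
    rw [← hr, map_smul, hπι]
  · show Zel R (m - π (p (ι m)))
    have h1 : m - π (p (ι m)) = π (ι m - p (ι m)) := by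
      rw [map_sub, hπι]
    rw [h1]
    exact zel_map π hpz

lemma hasEP_zero : HasEP R (Fin 0 → R) := by
  intro m
  refine ⟨0, ?_, ?_, ?_⟩
  · apply LinearMap.ext; intro x; rfl
  · rintro y ⟨x, rfl⟩
    show (0 : Module.End R (Fin 0 → R)) x ∈ _
    rw [LinearMap.zero_apply]
    exact Submodule.zero_mem _
  · have : m - (0 : Module.End R (Fin 0 → R)) m = 0 := Subsingleton.elim _ _
    rw [this]
    exact zel_zero

lemma kn_zero : IsKNdom R (Fin 0 → R) := by
  intro M' _ _ f hZ m hm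
  exact absurd (Subsingleton.elim m 0) hm

lemma kn_pair {M₁ M₂ : Type w} [AddCommGroup M₁] [Module R M₁] [AddCommGroup M₂] [Module R M₂]
    (h1 : IsKNdom R M₁) (h2 : IsKNdom R M₂) : IsKNdom R (M₁ × M₂) := by
  intro M' _ _ f hZ m hm
  have hdec : ∀ z : M₁ × M₂, f z = f (z.1, 0) + f (0, z.2) := by
    intro z
    rw [← map_add]
    congr 1
    ext <;> simp
  -- stage 1
  have stage1 : ∃ r₁ : R, r₁ • m ≠ 0 ∧ f ((r₁ • m).1, 0) = 0 := by
    by_cases hm1 : m.1 = 0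
    · refine ⟨1, by simpa using hm, ?_⟩
      rw [one_smul, hm1]
      exact map_zero f
    · have f1 : M₁ →ₗ[R] M' := f ∘ₗ LinearMap.inl R M₁ M₂
      obtain ⟨r, hr0, hr⟩ := h1 M' (f ∘ₗ LinearMap.inl R M₁ M₂)
        (fun x => hZ (x, 0)) m.1 hm1
      refine ⟨r, ?_, ?_⟩
      · intro h0
        apply hr0
        have : (r • m).1 = 0 := by rw [h0]; rfl
        rw [← this]; rfl
      · rw [LinearMap.comp_apply] at hr
        have : ((r • m).1 : M₁) = r • m.1 := rfl
        rw [this]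
        exact hr
  obtain ⟨r₁, hy0, hyf⟩ := stage1
  set y := r₁ • m with hy
  by_cases hy2 : y.2 = 0
  · refine ⟨r₁, hy0, ?_⟩
    rw [hdec (r₁ • m)]
    rw [← hy, hy2]
    have hz0 : ((y.1 : M₁), (0:M₂)) = ((r₁ • m).1, (0:M₂)) := by rw [hy]
    have hz1 : f ((0:M₁), (0:M₂)) = 0 := map_zero f
    rw [hz1, add_zero, hz0]
    exact hyf
  · obtain ⟨s, hs0, hs⟩ := h2 M' (f ∘ₗ LinearMap.inr R M₁ M₂)
      (fun x => hZ (0, x)) y.2 hy2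
    refine ⟨s * r₁, ?_, ?_⟩
    · intro h0
      apply hs0
      have hsy : (s * r₁) • m = s • y := by rw [hy, smul_smul]
      rw [hsy] at h0
      have : (s • y).2 = 0 := by rw [h0]; rfl
      rw [← this]; rfl
    · have hsy : (s * r₁) • m = s • y := by rw [hy, smul_smul]
      rw [hsy, hdec (s • y)]
      have e1 : ((s • y).1 : M₁) = s • y.1 := rfl
      have e2 : ((s • y).2 : M₂) = s • y.2 := rfl
      rw [e1, e2]
      have e3 : f ((s • y.1 : M₁), (0:M₂)) = s • f (y.1, 0) := by
        rw [← map_smul]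
        congr 1
        ext
        · rfl
        · show (0 : M₂) = s • 0
          rw [smul_zero]
      have e4 : f ((0:M₁), s • y.2) = 0 := by
        rw [LinearMap.comp_apply] at hs
        exact hs
      rw [e3, e4, add_zero]
      have e5 : f ((y.1 : M₁), (0:M₂)) = 0 := hyf
      rw [e5, smul_zero]

end S5

end CSRickartPaper


namespace CSRickartPaper

section S5B
universe w
variable {R : Type w} [Ring R]

lemma idem_combine {M : Type*} [AddCommGroup M] [Module R M] {q₂ q₁ : Module.End R M}
    (h2 : IsIdempotentElem q₂) (h1 : IsIdempotentElem q₁) (horth : ∀ x, q₂ (q₁ x) = 0) :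
    IsIdempotentElem (q₂ + q₁ - q₁ * q₂) := by
  have h2' : ∀ x, q₂ (q₂ x) = q₂ x := fun x => idem_fix h2 ⟨x, rfl⟩
  have h1' : ∀ x, q₁ (q₁ x) = q₁ x := fun x => idem_fix h1 ⟨x, rfl⟩
  apply LinearMap.ext; intro x
  show (q₂ + q₁ - q₁ * q₂) ((q₂ + q₁ - q₁ * q₂) x) = (q₂ + q₁ - q₁ * q₂) x
  have e0 : ∀ z, (q₂ + q₁ - q₁ * q₂) z = q₂ z + q₁ z - q₁ (q₂ z) := fun z => rfl
  simp only [e0]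
  simp only [map_add, map_sub, h2', h1', horth, map_zero, add_zero, sub_zero, zero_sub,
    zero_add, sub_self]
  abel

lemma range_idem_span {M : Type*} [AddCommGroup M] [Module R M] {p : Module.End R M}
    (hp : IsIdempotentElem p) {m : M}
    (h : LinearMap.range p ≤ Submodule.span R {m}) :
    LinearMap.range p = Submodule.span R {p m} := by
  apply le_antisymm
  · rintro y ⟨x, rfl⟩
    obtain ⟨r, hr⟩ := Submodule.mem_span_singleton.1 (h ⟨x, rfl⟩)
    rw [Submodule.mem_span_singleton]
    refine ⟨r, ?_⟩
    rw [← map_smul, hr]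
    exact idem_fix hp ⟨x, rfl⟩
  · rw [Submodule.span_le, Set.singleton_subset_iff]
    exact ⟨m, rfl⟩

lemma projective_range_idem {M : Type w} [AddCommGroup M] [Module R M] [Module.Projective R M]
    {p : Module.End R M} (hp : IsIdempotentElem p) :
    Module.Projective R ↥(LinearMap.range p) := by
  refine Module.Projective.of_split (LinearMap.range p).subtype
    (LinearMap.codRestrict _ p (fun x => ⟨x, rfl⟩)) ?_
  apply LinearMap.ext
  intro x
  apply Subtype.ext
  show p ↑x = ↑x
  exact idem_fix hp x.2

lemma span_lift {M : Type w} [AddCommGroup M] [Module R M] [Module.Projective R M]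
    {P₂ : Module.End R M} (hP₂ : IsIdempotentElem P₂) {m : M}
    (hspan : LinearMap.range P₂ = Submodule.span R {P₂ m}) :
    ∃ h : ↥(LinearMap.range P₂) →ₗ[R] M,
      (∀ a, P₂ (h a) = ↑a) ∧ ∀ a, h a ∈ Submodule.span R ({m} : Set M) := by
  have hproj : Module.Projective R ↥(LinearMap.range P₂) := projective_range_idem hP₂
  set S := Submodule.span R ({m} : Set M) with hS
  set τ : ↥S →ₗ[R] M := P₂ ∘ₗ S.subtype with hτ
  have hrτ : LinearMap.range τ = LinearMap.range P₂ := by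
    rw [hspan, hτ, LinearMap.range_comp, Submodule.range_subtype, hS,
      Submodule.map_span, Set.image_singleton]
  set f := LinearMap.codRestrict (LinearMap.range P₂) τ (fun c => by
    have hc : τ c ∈ LinearMap.range τ := ⟨c, rfl⟩
    rwa [hrτ] at hc) with hf
  have hfs : Function.Surjective f := by
    rintro ⟨b, hb⟩
    rw [← hrτ] at hb
    obtain ⟨c, hc⟩ := hb
    exact ⟨c, Subtype.ext hc⟩
  obtain ⟨h₀, hh₀⟩ := Module.projective_lifting_property f LinearMap.id hfs
  refine ⟨S.subtype ∘ₗ h₀, ?_, ?_⟩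
  · intro a
    have h3 : f (h₀ a) = a := by
      rw [← LinearMap.comp_apply, hh₀]; rfl
    have h4 := congrArg Subtype.val h3
    exact h4
  · intro a
    exact (h₀ a).2

lemma hasEP_pair {M₁ M₂ : Type w} [AddCommGroup M₁] [Module R M₁] [AddCommGroup M₂]
    [Module R M₂] [Module.Projective R M₁] [Module.Projective R M₂]
    (hEP1 : HasEP R M₁) (hEP2 : HasEP R M₂) : HasEP R (M₁ × M₂) := by
  intro m
  obtain ⟨p₂, hp₂, hle₂, hz₂⟩ := hEP2 m.2
  set P₂ : Module.End R (M₁ × M₂) :=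
    (LinearMap.inr R M₁ M₂) ∘ₗ p₂ ∘ₗ (LinearMap.snd R M₁ M₂) with hP₂def
  have hP₂apply : ∀ z : M₁ × M₂, P₂ z = ((0 : M₁), p₂ z.2) := fun z => rfl
  have hP₂idem : IsIdempotentElem P₂ := by
    apply LinearMap.ext; intro z
    show P₂ (P₂ z) = P₂ z
    rw [hP₂apply z, hP₂apply]
    have h0 : p₂ (((0 : M₁), p₂ z.2).2) = p₂ z.2 := idem_fix hp₂ ⟨z.2, rfl⟩
    rw [h0]
  have hP₂span : LinearMap.range P₂ = Submodule.span R {P₂ m} := by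
    apply le_antisymm
    · rintro y ⟨z, rfl⟩
      obtain ⟨r, hr⟩ := Submodule.mem_span_singleton.1 (hle₂ ⟨z.2, rfl⟩)
      rw [Submodule.mem_span_singleton]
      refine ⟨r, ?_⟩
      rw [hP₂apply, hP₂apply]
      have h1 : p₂ z.2 = r • p₂ m.2 := by
        have h2 : p₂ (p₂ z.2) = p₂ z.2 := idem_fix hp₂ ⟨z.2, rfl⟩
        rw [← h2, ← hr, map_smul]
      rw [Prod.smul_mk, smul_zero, h1]
    · rw [Submodule.span_le, Set.singleton_subset_iff]
      exact ⟨m, rfl⟩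
  obtain ⟨h, hPh, hhspan⟩ := span_lift hP₂idem hP₂span
  set abar₂ : M₁ × M₂ := h ⟨P₂ m, ⟨m, rfl⟩⟩ with habar₂
  have habar₂P : P₂ abar₂ = P₂ m := hPh _
  have habar₂span : abar₂ ∈ Submodule.span R ({m} : Set (M₁ × M₂)) := hhspan _
  set mstar : M₁ × M₂ := m - abar₂ with hmstar
  have hmstar_span : mstar ∈ Submodule.span R ({m} : Set (M₁ × M₂)) :=
    Submodule.sub_mem _ (Submodule.mem_span_singleton_self m) habar₂span
  have hP₂mstar : P₂ mstar = 0 := by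
    rw [hmstar, map_sub, habar₂P, sub_self]
  obtain ⟨t, ht⟩ := Submodule.mem_span_singleton.1 habar₂span
  have hv2 : mstar.2 = m.2 - t • m.2 := by
    rw [hmstar, ← ht]; rfl
  have hp₂v : p₂ mstar.2 = 0 := by
    have h5 := congrArg Prod.snd (hP₂mstar)
    rw [hP₂apply] at h5
    exact h5
  have hZv : Zel R mstar.2 := by
    have h6 : p₂ (m.2 - t • m.2) = 0 := by rw [← hv2]; exact hp₂v
    rw [map_sub, map_smul] at h6
    have h5 : mstar.2 = (m.2 - p₂ m.2) - t • (m.2 - p₂ m.2) := by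
      rw [hv2, smul_sub]
      have h8 : (m.2 - p₂ m.2) - (t • m.2 - t • p₂ m.2)
          = (m.2 - t • m.2) - (p₂ m.2 - t • p₂ m.2) := by abel
      rw [h8, h6, sub_zero]
    rw [h5, sub_eq_add_neg]
    exact zel_add hz₂ (zel_neg (zel_smul t hz₂))
  -- stage 1
  obtain ⟨p₁, hp₁, hle₁, hz₁⟩ := hEP1 mstar.1
  set P₁ : Module.End R (M₁ × M₂) :=
    (LinearMap.inl R M₁ M₂) ∘ₗ p₁ ∘ₗ (LinearMap.fst R M₁ M₂) with hP₁def
  have hP₁apply : ∀ z : M₁ × M₂, P₁ z = (p₁ z.1, (0 : M₂)) := fun z => rfl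
  have hP₁idem : IsIdempotentElem P₁ := by
    apply LinearMap.ext; intro z
    show P₁ (P₁ z) = P₁ z
    rw [hP₁apply z, hP₁apply]
    have h0 : p₁ ((p₁ z.1, (0 : M₂)).1) = p₁ z.1 := idem_fix hp₁ ⟨z.1, rfl⟩
    rw [h0]
  have hP₁span : LinearMap.range P₁ = Submodule.span R {P₁ mstar} := by
    apply le_antisymm
    · rintro y ⟨z, rfl⟩
      obtain ⟨r, hr⟩ := Submodule.mem_span_singleton.1 (hle₁ ⟨z.1, rfl⟩)
      rw [Submodule.mem_span_singleton]
      refine ⟨r, ?_⟩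
      rw [hP₁apply, hP₁apply]
      have h1 : p₁ z.1 = r • p₁ mstar.1 := by
        have h2 : p₁ (p₁ z.1) = p₁ z.1 := idem_fix hp₁ ⟨z.1, rfl⟩
        rw [← h2, ← hr, map_smul]
      rw [Prod.smul_mk, smul_zero, h1]
    · rw [Submodule.span_le, Set.singleton_subset_iff]
      exact ⟨mstar, rfl⟩
  obtain ⟨h₁, hPh₁, hh₁span⟩ := span_lift hP₁idem hP₁span
  set abar₁ : M₁ × M₂ := h₁ ⟨P₁ mstar, ⟨mstar, rfl⟩⟩ with habar₁
  have habar₁P : P₁ abar₁ = P₁ mstar := hPh₁ _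
  have habar₁span : abar₁ ∈ Submodule.span R ({mstar} : Set (M₁ × M₂)) := hh₁span _
  obtain ⟨s, hs⟩ := Submodule.mem_span_singleton.1 habar₁span
  set m2 : M₁ × M₂ := mstar - abar₁ with hm2
  have hP₁m2 : P₁ m2 = 0 := by rw [hm2, map_sub, habar₁P, sub_self]
  have hP₂abar₁ : P₂ abar₁ = 0 := by
    rw [← hs, map_smul, hP₂mstar, smul_zero]
  have hm2c1 : m2.1 = mstar.1 - s • mstar.1 := by rw [hm2, ← hs]; rfl
  have hm2c2 : m2.2 = mstar.2 - s • mstar.2 := by rw [hm2, ← hs]; rfl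
  have hp₁m2 : p₁ m2.1 = 0 := by
    have h5 := congrArg Prod.fst hP₁m2
    rw [hP₁apply] at h5
    exact h5
  have hc1 : Zel R m2.1 := by
    have h6 : p₁ (mstar.1 - s • mstar.1) = 0 := by rw [← hm2c1]; exact hp₁m2
    rw [map_sub, map_smul] at h6
    have h5 : m2.1 = (mstar.1 - p₁ mstar.1) - s • (mstar.1 - p₁ mstar.1) := by
      rw [hm2c1, smul_sub]
      have h8 : (mstar.1 - p₁ mstar.1) - (s • mstar.1 - s • p₁ mstar.1)
          = (mstar.1 - s • mstar.1) - (p₁ mstar.1 - s • p₁ mstar.1) := by abel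
      rw [h8, h6, sub_zero]
    rw [h5, sub_eq_add_neg]
    exact zel_add hz₁ (zel_neg (zel_smul s hz₁))
  have hc2 : Zel R m2.2 := by
    rw [hm2c2, sub_eq_add_neg]
    exact zel_add hZv (zel_neg (zel_smul s hZv))
  have hZm2 : Zel R m2 := by
    have h9 := zel_pair hc1 hc2
    rwa [Prod.mk.eta] at h9
  -- combine the idempotents
  set ρ₂ : (M₁ × M₂) →ₗ[R] ↥(LinearMap.range P₂) :=
    LinearMap.codRestrict _ P₂ (fun x => ⟨x, rfl⟩) with hρ₂
  set ρ₁ : (M₁ × M₂) →ₗ[R] ↥(LinearMap.range P₁) :=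
    LinearMap.codRestrict _ P₁ (fun x => ⟨x, rfl⟩) with hρ₁
  set Q₂ := h ∘ₗ ρ₂ with hQ₂
  set Q₁ := h₁ ∘ₗ ρ₁ with hQ₁
  have hQ₂apply : ∀ x, Q₂ x = h ⟨P₂ x, ⟨x, rfl⟩⟩ := fun x => rfl
  have hQ₁apply : ∀ x, Q₁ x = h₁ ⟨P₁ x, ⟨x, rfl⟩⟩ := fun x => rfl
  have hρ₂h : ∀ a, ρ₂ (h a) = a := by
    intro a
    apply Subtype.ext
    exact hPh a
  have hρ₁h : ∀ a, ρ₁ (h₁ a) = a := by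
    intro a
    apply Subtype.ext
    exact hPh₁ a
  have hQ₂idem : IsIdempotentElem Q₂ := by
    apply LinearMap.ext; intro x
    show h (ρ₂ (h (ρ₂ x))) = h (ρ₂ x)
    rw [hρ₂h]
  have hQ₁idem : IsIdempotentElem Q₁ := by
    apply LinearMap.ext; intro x
    show h₁ (ρ₁ (h₁ (ρ₁ x))) = h₁ (ρ₁ x)
    rw [hρ₁h]
  have hQ₂span : ∀ x, Q₂ x ∈ Submodule.span R ({m} : Set (M₁ × M₂)) := fun x => hhspan _
  have hQ₁span : ∀ x, Q₁ x ∈ Submodule.span R ({mstar} : Set (M₁ × M₂)) := fun x => hh₁span _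
  have hQ₂mstar : Q₂ mstar = 0 := by
    rw [hQ₂apply]
    have he : (⟨P₂ mstar, ⟨mstar, rfl⟩⟩ : ↥(LinearMap.range P₂)) = 0 :=
      Subtype.ext hP₂mstar
    rw [he, map_zero]
  have horth : ∀ x, Q₂ (Q₁ x) = 0 := by
    intro x
    obtain ⟨r, hr⟩ := Submodule.mem_span_singleton.1 (hQ₁span x)
    rw [← hr, map_smul, hQ₂mstar, smul_zero]
  refine ⟨Q₂ + Q₁ - Q₁ * Q₂, idem_combine hQ₂idem hQ₁idem horth, ?_, ?_⟩
  · rintro y ⟨x, rfl⟩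
    have he : (Q₂ + Q₁ - Q₁ * Q₂) x = Q₂ x + Q₁ x - Q₁ (Q₂ x) := rfl
    rw [he]
    have hsub : Submodule.span R ({mstar} : Set (M₁ × M₂))
        ≤ Submodule.span R ({m} : Set (M₁ × M₂)) := by
      rw [Submodule.span_le, Set.singleton_subset_iff]
      exact hmstar_span
    refine Submodule.sub_mem _ (Submodule.add_mem _ (hQ₂span x) (hsub (hQ₁span x)))
      (hsub (hQ₁span _))
  · have he : (Q₂ + Q₁ - Q₁ * Q₂) m = Q₂ m + Q₁ m - Q₁ (Q₂ m) := rfl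
    have e1 : Q₂ m = abar₂ := rfl
    have e3 : Q₁ mstar = abar₁ := rfl
    have key : m - (Q₂ + Q₁ - Q₁ * Q₂) m = m2 := by
      rw [he]
      calc m - (Q₂ m + Q₁ m - Q₁ (Q₂ m))
          = (m - Q₂ m) - Q₁ (m - Q₂ m) := by rw [map_sub]; abel
      _ = mstar - Q₁ mstar := by rw [e1, ← hmstar]
      _ = mstar - abar₁ := by rw [e3]
      _ = m2 := rfl
    rw [key]
    exact hZm2

end S5B

end CSRickartPaper


namespace CSRickartPaper

section S5C
universe w
variable {R : Type w} [Ring R]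

/-- The linear equivalence `(Fin (n+1) → R) ≃ R × (Fin n → R)`. -/
def finSuccPiEquiv (R : Type w) [Ring R] (n : ℕ) :
    (Fin (n + 1) → R) ≃ₗ[R] R × (Fin n → R) :=
  { (Fin.consEquiv fun _ : Fin (n + 1) => R).symm with
    map_add' := fun x y => rfl
    map_smul' := fun r x => rfl }

lemma hasFG {P : Type w} [AddCommGroup P] [Module R P] (hEP : HasEP R P) :
    ∀ (k : ℕ) (x : Fin k → P), ∃ p : Module.End R P, IsIdempotentElem p ∧
      LinearMap.range p ≤ Submodule.span R (Set.range x) ∧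
      ∀ i, Zel R (x i - p (x i)) := by
  intro k
  induction k with
  | zero =>
    intro x
    refine ⟨0, ?_, ?_, ?_⟩
    · apply LinearMap.ext; intro z; rfl
    · rintro y ⟨z, rfl⟩
      show (0 : Module.End R P) z ∈ _
      rw [LinearMap.zero_apply]
      exact Submodule.zero_mem _
    · intro i
      exact i.elim0
  | succ k IH =>
    intro x
    obtain ⟨p₀, hp₀, hle₀, hz₀⟩ := hEP (x 0)
    set y : Fin k → P := fun i => x i.succ - p₀ (x i.succ) with hy
    obtain ⟨p', hp', hle', hz'⟩ := IH y
    have hyker : ∀ i, p₀ (y i) = 0 := by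
      intro i
      show p₀ (x i.succ - p₀ (x i.succ)) = 0
      rw [map_sub, idem_fix hp₀ ⟨x i.succ, rfl⟩, sub_self]
    have hker : ∀ z, p₀ (p' z) = 0 := by
      intro z
      have hsp : Submodule.span R (Set.range y) ≤ LinearMap.ker p₀ := by
        rw [Submodule.span_le]
        rintro w ⟨i, rfl⟩
        exact hyker i
      exact hsp (hle' ⟨z, rfl⟩)
    have h1 : Submodule.span R ({x 0} : Set P) ≤ Submodule.span R (Set.range x) := by
      rw [Submodule.span_le, Set.singleton_subset_iff]
      exact Submodule.subset_span ⟨0, rfl⟩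
    have h2 : Submodule.span R (Set.range y) ≤ Submodule.span R (Set.range x) := by
      rw [Submodule.span_le]
      rintro w ⟨i, rfl⟩
      show x i.succ - p₀ (x i.succ) ∈ _
      refine Submodule.sub_mem _ (Submodule.subset_span ⟨i.succ, rfl⟩) ?_
      exact h1 (hle₀ ⟨x i.succ, rfl⟩)
    refine ⟨p₀ + p' - p' * p₀, idem_combine hp₀ hp' hker, ?_, ?_⟩
    · rintro w ⟨z, rfl⟩
      have he : (p₀ + p' - p' * p₀) z = p₀ z + p' z - p' (p₀ z) := rfl
      rw [he]
      exact Submodule.sub_mem _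
        (Submodule.add_mem _ (h1 (hle₀ ⟨z, rfl⟩)) (h2 (hle' ⟨z, rfl⟩)))
        (h2 (hle' ⟨p₀ z, rfl⟩))
    · intro i
      have key : ∀ z : P, z - (p₀ + p' - p' * p₀) z = (z - p₀ z) - p' (z - p₀ z) := by
        intro z
        have he : (p₀ + p' - p' * p₀) z = p₀ z + p' z - p' (p₀ z) := rfl
        rw [he, map_sub]
        abel
      refine Fin.cases ?_ ?_ i
      · rw [key]
        rw [sub_eq_add_neg]
        exact zel_add hz₀ (zel_neg (zel_map p' hz₀))
      · intro j
        rw [key]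
        have hyj : x j.succ - p₀ (x j.succ) = y j := rfl
        rw [hyj]
        exact hz' j

theorem forward_direction (hsr : IsSemiregularRing R) (hJZ : JacEqSingular R)
    (P : Type w) [AddCommGroup P] [Module R P] (hfin : Module.Finite R P)
    (hproj : Module.Projective R P) : IsCSRickart R P ∧ IsC2 R P := by
  classical
  haveI := hproj
  obtain ⟨n, f, g, hfsurj, hginj, hfg⟩ := Module.Finite.exists_comp_eq_id_of_projective R P
  have hπι : ∀ x : P, f (g x) = x := by
    intro x
    have h0 := congrArg (fun ψ : P →ₗ[R] P => ψ x) hfg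
    exact h0
  have hgood : ∀ k : ℕ, HasEP R (Fin k → R) ∧ IsKNdom R (Fin k → R) := by
    intro k
    induction k with
    | zero => exact ⟨hasEP_zero, kn_zero⟩
    | succ j IH =>
      have hpairEP : HasEP R (R × (Fin j → R)) :=
        hasEP_pair (hasEP_ring hsr hJZ) IH.1
      have hpairKN : IsKNdom R (R × (Fin j → R)) := kn_pair kn_ring IH.2
      refine ⟨?_, ?_⟩
      · exact hasEP_split (finSuccPiEquiv R j).toLinearMap
          (finSuccPiEquiv R j).symm.toLinearMap
          (fun x => (finSuccPiEquiv R j).symm_apply_apply x) hpairEP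
      · exact kn_split (finSuccPiEquiv R j).toLinearMap
          (finSuccPiEquiv R j).symm.toLinearMap
          (fun x => (finSuccPiEquiv R j).symm_apply_apply x) hpairKN
  have hEPP : HasEP R P := hasEP_split g f hπι (hgood n).1
  have hKNP : IsKNdom R P := kn_split g f hπι (hgood n).2
  obtain ⟨kgen, gens, hgens⟩ := Module.Finite.exists_fin (R := R) (M := P)
  constructor
  · -- CS-Rickart
    intro φ
    have h1 : Set.range (fun i => φ (gens i)) = φ '' Set.range gens := by
      ext w
      constructor
      · rintro ⟨i, rfl⟩
        exact ⟨gens i, ⟨i, rfl⟩, rfl⟩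
      · rintro ⟨v, ⟨i, rfl⟩, rfl⟩
        exact ⟨i, rfl⟩
    have hNspan : Submodule.span R (Set.range (fun i => φ (gens i))) = LinearMap.range φ := by
      rw [h1, ← Submodule.map_span, hgens, Submodule.map_top]
    obtain ⟨pA, hpA, hpAle, hpAz⟩ := hasFG hEPP kgen (fun i => φ (gens i))
    rw [hNspan] at hpAle
    set W : Submodule R P :=
      { carrier := {z | Zel R (z - pA z)}
        add_mem' := fun {a b} ha hb => by
          show Zel R ((a + b) - pA (a + b))
          rw [map_add]
          have h2 : (a + b) - (pA a + pA b) = (a - pA a) + (b - pA b) := by abel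
          rw [h2]
          exact zel_add ha hb
        zero_mem' := by
          show Zel R ((0 : P) - pA 0)
          rw [map_zero, sub_zero]
          exact zel_zero
        smul_mem' := fun r a ha => by
          show Zel R (r • a - pA (r • a))
          rw [map_smul, ← smul_sub]
          exact zel_smul r ha } with hW
    have hres : LinearMap.range φ ≤ W := by
      rw [← hNspan, Submodule.span_le]
      rintro w ⟨i, rfl⟩
      exact hpAz i
    set N := LinearMap.range φ with hN
    set f1 : P →ₗ[R] ↥N := LinearMap.codRestrict N φ (fun x => ⟨x, rfl⟩) with hf1
    have hf1surj : Function.Surjective f1 := by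
      rintro ⟨b, hb⟩
      obtain ⟨x, hx⟩ := hb
      exact ⟨x, Subtype.ext hx⟩
    set g1 : P →ₗ[R] ↥N := LinearMap.codRestrict N pA (fun x => hpAle ⟨x, rfl⟩) with hg1
    obtain ⟨st, hst⟩ := Module.projective_lifting_property f1 g1 hf1surj
    have hφs : ∀ z, φ (st z) = pA z := by
      intro z
      have h3 := congrArg (fun q : P →ₗ[R] ↥N => (q z : P)) hst
      exact h3
    set e := st ∘ₗ pA ∘ₗ φ with he
    have heapply : ∀ z, e z = st (pA (φ z)) := fun z => rfl
    have hpAidem : ∀ z, pA (pA z) = pA z := fun z => idem_fix hpA ⟨z, rfl⟩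
    have heidem : IsIdempotentElem e := by
      apply LinearMap.ext; intro z
      show st (pA (φ (st (pA (φ z))))) = st (pA (φ z))
      rw [hφs, hpAidem, hpAidem]
    refine ⟨1 - e, IsIdempotentElem.one_sub heidem, ?_, ?_⟩
    · intro z hz
      rw [LinearMap.mem_ker] at hz
      rw [mem_range_one_sub_idem heidem]
      rw [heapply, hz, map_zero, map_zero]
    · intro K hK hdisj
      rw [Submodule.eq_bot_iff]
      intro w hw
      by_contra hw0
      set ψ : Module.End R P := φ - pA ∘ₗ φ with hψ
      have hψz : ∀ z, Zel R (ψ z) := by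
        intro z
        show Zel R (φ z - pA (φ z))
        exact hres ⟨z, rfl⟩
      obtain ⟨r, hr0, hrψ⟩ := hKNP P ψ hψz w hw0
      have hrwK : r • w ∈ K := K.smul_mem r hw
      have herw : e (r • w) = 0 := (mem_range_one_sub_idem heidem).1 (hK hrwK)
      have hφrw : φ (r • w) = 0 := by
        have h5 : φ (e (r • w)) = pA (φ (r • w)) := by
          rw [heapply, hφs, hpAidem]
        have h6 : φ (r • w) = ψ (r • w) + φ (e (r • w)) := by
          rw [h5]
          show φ (r • w) = (φ (r • w) - pA (φ (r • w))) + pA (φ (r • w))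
          abel
        rw [h6, hrψ, herw, map_zero, add_zero]
      have h7 : r • w ∈ LinearMap.ker φ ⊓ K := ⟨LinearMap.mem_ker.2 hφrw, hrwK⟩
      rw [hdisj] at h7
      exact hr0 h7
  · -- C2
    intro N D hD hiso
    obtain ⟨α⟩ := hiso
    obtain ⟨D', hDD'⟩ := hD
    set πD := Submodule.projectionOnto D D' hDD' with hπD
    set φ : Module.End R P := N.subtype ∘ₗ (α.symm.toLinearMap) ∘ₗ πD with hφdef
    have hφapply : ∀ z, φ z = ↑(α.symm (πD z)) := fun z => rfl
    have hφrange : LinearMap.range φ = N := by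
      apply le_antisymm
      · rintro w ⟨z, rfl⟩
        rw [hφapply]
        exact (α.symm (πD z)).2
      · intro z hz
        refine ⟨↑(α ⟨z, hz⟩), ?_⟩
        rw [hφapply, Submodule.projectionOnto_apply_left hDD' (α ⟨z, hz⟩),
          LinearEquiv.symm_apply_apply]
    have h1 : Set.range (fun i => φ (gens i)) = φ '' Set.range gens := by
      ext w
      constructor
      · rintro ⟨i, rfl⟩
        exact ⟨gens i, ⟨i, rfl⟩, rfl⟩
      · rintro ⟨v, ⟨i, rfl⟩, rfl⟩
        exact ⟨i, rfl⟩
    have hNspan : Submodule.span R (Set.range (fun i => φ (gens i))) = N := by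
      rw [h1, ← Submodule.map_span, hgens, Submodule.map_top, hφrange]
    obtain ⟨pA, hpA, hpAle, hpAz⟩ := hasFG hEPP kgen (fun i => φ (gens i))
    rw [hNspan] at hpAle
    have hres : ∀ z ∈ N, Zel R (z - pA z) := by
      intro z hz
      rw [← hNspan] at hz
      set W : Submodule R P :=
        { carrier := {z | Zel R (z - pA z)}
          add_mem' := fun {a b} ha hb => by
            show Zel R ((a + b) - pA (a + b))
            rw [map_add]
            have h2 : (a + b) - (pA a + pA b) = (a - pA a) + (b - pA b) := by abel
            rw [h2]
            exact zel_add ha hb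
          zero_mem' := by
            show Zel R ((0 : P) - pA 0)
            rw [map_zero, sub_zero]
            exact zel_zero
          smul_mem' := fun r a ha => by
            show Zel R (r • a - pA (r • a))
            rw [map_smul, ← smul_sub]
            exact zel_smul r ha } with hW
      have hspanle : Submodule.span R (Set.range (fun i => φ (gens i))) ≤ W := by
        rw [Submodule.span_le]
        rintro w ⟨i, rfl⟩
        exact hpAz i
      exact hspanle hz
    set β : ↥D →ₗ[R] P := (1 - pA) ∘ₗ N.subtype ∘ₗ α.symm.toLinearMap with hβ
    have hβapply : ∀ d, β d = ↑(α.symm d) - pA ↑(α.symm d) := fun d => rfl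
    have hβmem : ∀ d, β d ∈ N := by
      intro d
      rw [hβapply]
      exact N.sub_mem (α.symm d).2 (hpAle ⟨_, rfl⟩)
    set μ := LinearMap.codRestrict N β hβmem with hμdef
    set χ : Module.End R P := D.subtype ∘ₗ α.toLinearMap ∘ₗ μ ∘ₗ πD with hχdef
    have hχapply : ∀ z, χ z = ↑(α (μ (πD z))) := fun z => rfl
    have hχz : ∀ z, Zel R (χ z) := by
      intro z
      rw [hχapply]
      have hz1 : Zel R ((μ (πD z) : P)) := by
        show Zel R (β (πD z))
        rw [hβapply]
        exact hres _ (α.symm (πD z)).2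
      refine zel_of_ann_le ?_ hz1
      intro r hr
      have h2 : r • (μ (πD z)) = 0 := by
        apply Subtype.ext
        rw [SetLike.val_smul]
        exact hr
      have h4 : r • α (μ (πD z)) = 0 := by
        rw [← map_smul α r (μ (πD z)), h2, map_zero]
      calc r • (↑(α (μ (πD z))) : P) = ↑(r • α (μ (πD z))) := rfl
      _ = (0 : P) := by rw [h4]; rfl
    have hfix : ∀ (t : P) (h1 : t ∈ N), pA t = 0 →
        χ ↑(α ⟨t, h1⟩) = ↑(α ⟨t, h1⟩) := by
      intro t h1 h2
      rw [hχapply, Submodule.projectionOnto_apply_left hDD' (α ⟨t, h1⟩)]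
      have h3 : μ (α ⟨t, h1⟩) = ⟨t, h1⟩ := by
        apply Subtype.ext
        show β (α ⟨t, h1⟩) = t
        rw [hβapply, LinearEquiv.symm_apply_apply]
        show t - pA t = t
        rw [h2, sub_zero]
      rw [h3]
    have hkey : ∀ t, t ∈ N → pA t = 0 → t = 0 := by
      intro t htN htk
      by_contra ht0
      have hw0 : (↑(α ⟨t, htN⟩) : P) ≠ 0 := by
        intro h0
        apply ht0
        have h4 : α ⟨t, htN⟩ = 0 := Subtype.ext h0
        have h5 : (⟨t, htN⟩ : ↥N) = 0 := by
          apply α.injective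
          rw [h4, map_zero]
        exact congrArg Subtype.val h5
      obtain ⟨r, hr0, hrχ⟩ := hKNP P χ hχz _ hw0
      have h6 : r • (↑(α ⟨t, htN⟩) : P) = ↑(α ⟨r • t, N.smul_mem r htN⟩) := by
        calc r • (↑(α ⟨t, htN⟩) : P) = ↑(r • α ⟨t, htN⟩) := rfl
        _ = ↑(α (r • (⟨t, htN⟩ : ↥N))) := by rw [map_smul α r (⟨t, htN⟩ : ↥N)]
        _ = ↑(α ⟨r • t, N.smul_mem r htN⟩) := rfl
      have h7 : pA (r • t) = 0 := by
        rw [map_smul, htk, smul_zero]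
      have h8 := hfix (r • t) (N.smul_mem r htN) h7
      rw [h6, h8] at hrχ
      rw [h6] at hr0
      exact hr0 hrχ
    have hNA : N = LinearMap.range pA := by
      apply le_antisymm
      · intro z hz
        have hd1 : z - pA z ∈ N := N.sub_mem hz (hpAle ⟨z, rfl⟩)
        have hd2 : pA (z - pA z) = 0 := by
          rw [map_sub, idem_fix hpA ⟨z, rfl⟩, sub_self]
        have hd3 : z - pA z = 0 := hkey _ hd1 hd2
        have hd4 : z = pA z := by
          have := sub_eq_zero.1 hd3
          exact this
        exact ⟨z, hd4.symm⟩
      · exact hpAle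
    refine ⟨LinearMap.ker pA, ?_⟩
    rw [hNA]
    exact isCompl_range_ker_idem hpA

end S5C

end CSRickartPaper

namespace CSRickartPaper

universe u

/-- `R` is semiregular with `J(R) = Z(R)` iff every finitely generated
projective `R`-module is a CS-Rickart module which is also a C₂ module. -/
theorem semiregular_iff_fg_projective_csRickart_c2
    {R : Type u} [Ring R] :
    (IsSemiregularRing R ∧ JacEqSingular R) ↔
    (∀ (P : Type u) [AddCommGroup P] [Module R P],
      Module.Finite R P → Module.Projective R P → IsCSRickart R P ∧ IsC2 R P) := by
  constructor
  · rintro ⟨hsr, hJZ⟩ P _ _ hfin hproj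
    exact forward_direction hsr hJZ P hfin hproj
  · intro h
    have hR := h R inferInstance inferInstance
    exact backward_direction hR.1 hR.2

end CSRickartPaper
end

section
/- Let M = M₁ ⊕ … ⊕ Mₙ be a right R-module satisfying the C₂ condition. If M_i is relatively CS-Rickart to M_j for all i, j ∈ {1,…,n}, then M is a CS-Rickart module. -/
namespace CSRickartPaper

section EssLemmas

variable {R : Type*} [Ring R] {M : Type*} [AddCommGroup M] [Module R M]

theorem mem_bot_of_inf_eq_bot {N K : Submodule R M} (h : N ⊓ K = ⊥) {x : M}
    (hxN : x ∈ N) (hxK : x ∈ K) : x = 0 := by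
  have : x ∈ N ⊓ K := Submodule.mem_inf.mpr ⟨hxN, hxK⟩
  rw [h] at this
  simpa using this

theorem ess_refl (N : Submodule R M) : EssentialIn N N :=
  ⟨le_rfl, fun K hK h => by rwa [inf_eq_right.mpr hK] at h⟩

theorem ess_mono_left {N N' P : Submodule R M} (h : EssentialIn N P) (h1 : N ≤ N')
    (h2 : N' ≤ P) : EssentialIn N' P := by
  refine ⟨h2, fun K hK hNK => h.2 K hK ?_⟩
  rw [eq_bot_iff, ← hNK]
  exact inf_le_inf_right K h1

theorem ess_trans {N P Q : Submodule R M} (h1 : EssentialIn N P) (h2 : EssentialIn P Q) :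
    EssentialIn N Q := by
  refine ⟨h1.1.trans h2.1, fun K hK hNK => ?_⟩
  have hPK : P ⊓ K = ⊥ := by
    refine h1.2 (P ⊓ K) inf_le_left ?_
    rw [eq_bot_iff, ← hNK]
    intro x hx
    rw [Submodule.mem_inf] at hx ⊢
    exact ⟨hx.1, hx.2.2⟩
  exact h2.2 K hK hPK

theorem ess_inf {N P Q : Submodule R M} (h : EssentialIn N P) (hQ : Q ≤ P) :
    EssentialIn (N ⊓ Q) Q := by
  refine ⟨inf_le_right, fun K hK hNK => ?_⟩
  refine h.2 K (hK.trans hQ) ?_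
  rw [eq_bot_iff, ← hNK]
  intro x hx
  rw [Submodule.mem_inf] at hx ⊢
  exact ⟨⟨hx.1, hK hx.2⟩, hx.2⟩

theorem ess_point {N P : Submodule R M} (h : EssentialIn N P) {x : M} (hx : x ∈ P)
    (hx0 : x ≠ 0) : ∃ r : R, r • x ∈ N ∧ r • x ≠ 0 := by
  by_contra hcon
  push_neg at hcon
  have hK : Submodule.span R {x} ≤ P := by
    rw [Submodule.span_le, Set.singleton_subset_iff]; exact hx
  have hb : Submodule.span R {x} = ⊥ := by
    refine h.2 _ hK ?_
    rw [eq_bot_iff]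
    intro y hy
    rw [Submodule.mem_inf] at hy
    obtain ⟨hyN, hyK⟩ := hy
    rw [Submodule.mem_span_singleton] at hyK
    obtain ⟨r, rfl⟩ := hyK
    simpa using hcon r hyN
  apply hx0
  have : x ∈ Submodule.span R {x} := Submodule.mem_span_singleton_self x
  rw [hb] at this
  simpa using this

theorem ess_of_forall {N P : Submodule R M} (hNP : N ≤ P)
    (h : ∀ x ∈ P, x ≠ 0 → ∃ r : R, r • x ∈ N ∧ r • x ≠ 0) : EssentialIn N P := by
  refine ⟨hNP, fun K hK hNK => ?_⟩
  rw [eq_bot_iff]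
  intro x hxK
  rw [Submodule.mem_bot]
  by_contra hx0
  obtain ⟨r, hrN, hr0⟩ := h x (hK hxK) hx0
  exact hr0 (mem_bot_of_inf_eq_bot hNK hrN (K.smul_mem r hxK))

theorem ess_inter {A B P : Submodule R M} (hA : EssentialIn A P) (hB : EssentialIn B P) :
    EssentialIn (A ⊓ B) P := by
  refine ⟨inf_le_left.trans hA.1, fun K hK h => ?_⟩
  have hBK : B ⊓ (A ⊓ K) = ⊥ := by
    rw [eq_bot_iff, ← h]
    intro x hx
    rw [Submodule.mem_inf] at hx ⊢
    rw [Submodule.mem_inf] at hx ⊢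
    exact ⟨⟨hx.2.1, hx.1⟩, hx.2.2⟩
  have hAK : A ⊓ K = ⊥ := hB.2 (A ⊓ K) (inf_le_right.trans hK) hBK
  exact hA.2 K hK hAK

theorem ess_sup_right {N P Q : Submodule R M} (h : EssentialIn N P) (hPQ : P ⊓ Q = ⊥) :
    EssentialIn (N ⊔ Q) (P ⊔ Q) := by
  refine ⟨sup_le_sup_right h.1 Q, fun K hK hNK => ?_⟩
  rw [eq_bot_iff]
  intro x hxK
  rw [Submodule.mem_bot]
  by_contra hx0
  obtain ⟨p, hp, q, hq, rfl⟩ := Submodule.mem_sup.mp (hK hxK)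
  by_cases hp0 : p = 0
  · subst hp0
    refine hx0 (mem_bot_of_inf_eq_bot hNK ?_ hxK)
    exact Submodule.mem_sup_right (by simpa using hq)
  · obtain ⟨r, hrN, hr0⟩ := ess_point h hp hp0
    have hmem : r • (p + q) ∈ N ⊔ Q := by
      rw [smul_add]
      exact Submodule.add_mem_sup hrN (Q.smul_mem r hq)
    have hz : r • (p + q) = 0 :=
      mem_bot_of_inf_eq_bot hNK hmem (K.smul_mem r hxK)
    rw [smul_add, add_eq_zero_iff_eq_neg] at hz
    exact hr0 (mem_bot_of_inf_eq_bot hPQ (P.smul_mem r hp)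
      (hz ▸ Q.neg_mem (Q.smul_mem r hq)))

theorem ess_sup {N1 P1 N2 P2 : Submodule R M} (h1 : EssentialIn N1 P1) (h2 : EssentialIn N2 P2)
    (hP : P1 ⊓ P2 = ⊥) : EssentialIn (N1 ⊔ N2) (P1 ⊔ P2) := by
  have e1 : EssentialIn (N1 ⊔ P2) (P1 ⊔ P2) := ess_sup_right h1 hP
  have e2 : EssentialIn (P1 ⊔ N2) (P1 ⊔ P2) := by
    have := ess_sup_right h2 (by rw [inf_comm, hP])
    rwa [sup_comm N2 P1, sup_comm P2 P1] at this
  have key : (N1 ⊔ P2) ⊓ (P1 ⊔ N2) = N1 ⊔ N2 := by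
    apply le_antisymm
    · intro x hx
      rw [Submodule.mem_inf] at hx
      obtain ⟨a, ha, b, hb, hab⟩ := Submodule.mem_sup.mp hx.1
      obtain ⟨c, hc, d, hd, hcd⟩ := Submodule.mem_sup.mp hx.2
      have hac : a - c = d - b := by
        have h' : a + b = c + d := hab.trans hcd.symm
        have : (a - c) - (d - b) = (a + b) - (c + d) := by abel
        rw [h', sub_self] at this
        exact sub_eq_zero.mp this
      have hzero : a - c = 0 := mem_bot_of_inf_eq_bot hP
        (P1.sub_mem (h1.1 ha) hc) (hac ▸ P2.sub_mem (h2.1 hd) hb)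
      have hbd : b = d := by
        have hdb : d - b = 0 := hac ▸ hzero
        exact (sub_eq_zero.mp hdb).symm
      rw [← hab]
      have : a = c := sub_eq_zero.mp hzero
      exact Submodule.add_mem_sup ha (hbd ▸ hd)
    · exact sup_le (le_inf le_sup_left (h1.1.trans le_sup_left))
        (le_inf (h2.1.trans le_sup_right) le_sup_right)
  rw [← key]
  exact ess_inter e1 e2

end EssLemmas

end CSRickartPaper
namespace CSRickartPaper

section Transfer

variable {R : Type*} [Ring R] {M : Type*} [AddCommGroup M] [Module R M]

theorem ess_map_equiv (u : M ≃ₗ[R] M) {N P : Submodule R M} (h : EssentialIn N P) :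
    EssentialIn (N.map (u : M →ₗ[R] M)) (P.map (u : M →ₗ[R] M)) := by
  refine ⟨Submodule.map_mono h.1, fun K hK hNK => ?_⟩
  set K' : Submodule R M := K.map (u.symm : M →ₗ[R] M) with hK'
  have memK' : ∀ x : M, x ∈ K' ↔ u x ∈ K := by
    intro x
    constructor
    · rintro ⟨y, hy, rfl⟩
      simpa using hy
    · intro hx
      exact ⟨u x, hx, by simp⟩
  have hK'P : K' ≤ P := by
    intro x hx
    rw [memK'] at hx
    obtain ⟨p, hp, hpx⟩ := hK hx
    have : p = x := u.injective hpx
    exact this ▸ hp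
  have hK'bot : K' = ⊥ := by
    refine h.2 K' hK'P ?_
    rw [eq_bot_iff]
    intro x hx
    rw [Submodule.mem_inf, memK'] at hx
    have : u x ∈ N.map (u : M →ₗ[R] M) ⊓ K := Submodule.mem_inf.mpr ⟨⟨x, hx.1, rfl⟩, hx.2⟩
    rw [hNK] at this
    rw [Submodule.mem_bot] at this ⊢
    exact u.injective (by simpa using this)
  rw [eq_bot_iff]
  intro x hx
  have : u.symm x ∈ K' := ⟨x, hx, rfl⟩
  rw [hK'bot] at this
  rw [Submodule.mem_bot] at this ⊢
  exact u.symm.injective (by simpa using this)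

theorem ess_map_subtype {W : Submodule R M} {N P : Submodule R W} (h : EssentialIn N P) :
    EssentialIn (N.map W.subtype) (P.map W.subtype) := by
  refine ⟨Submodule.map_mono h.1, fun K hK hNK => ?_⟩
  have hKW : K ≤ W := hK.trans (Submodule.map_subtype_le W P)
  set K' : Submodule R W := K.comap W.subtype with hK'def
  have hmapK : K'.map W.subtype = K := by
    rw [hK'def, Submodule.map_comap_subtype, inf_eq_right.mpr hKW]
  have hK'P : K' ≤ P := by
    intro x hx
    have : (x : M) ∈ K := hx
    obtain ⟨y, hy, hyx⟩ := hK this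
    have : y = x := Subtype.ext hyx
    exact this ▸ hy
  have hK'bot : K' = ⊥ := by
    refine h.2 K' hK'P ?_
    rw [eq_bot_iff]
    intro x hx
    rw [Submodule.mem_inf] at hx
    have hxm : (x : M) ∈ N.map W.subtype ⊓ K := Submodule.mem_inf.mpr ⟨⟨x, hx.1, rfl⟩, hx.2⟩
    rw [hNK] at hxm
    rw [Submodule.mem_bot] at hxm
    rw [Submodule.mem_bot]
    exact Subtype.ext hxm
  rw [← hmapK, hK'bot, Submodule.map_bot]

end Transfer

section Idem

variable {R : Type*} [Ring R] {M : Type*} [AddCommGroup M] [Module R M]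

theorem idem_apply_mem {e : Module.End R M} (he : e ∘ₗ e = e) {x : M}
    (hx : x ∈ LinearMap.range e) : e x = x := by
  obtain ⟨y, rfl⟩ := hx
  exact congrFun (congrArg DFunLike.coe he) y

theorem isCompl_of_idem {e : Module.End R M} (he : e ∘ₗ e = e) :
    IsCompl (LinearMap.range e) (LinearMap.ker e) := by
  constructor
  · rw [disjoint_iff, eq_bot_iff]
    intro x hx
    rw [Submodule.mem_inf] at hx
    rw [Submodule.mem_bot]
    rw [← idem_apply_mem he hx.1]
    exact hx.2
  · rw [codisjoint_iff, eq_top_iff]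
    intro x _
    have : x = e x + (x - e x) := by abel
    rw [this]
    refine Submodule.add_mem_sup (LinearMap.mem_range_self e x) ?_
    rw [LinearMap.mem_ker, map_sub, ← LinearMap.comp_apply, he, sub_self]

/-- The projection onto `p` along `q`, as an endomorphism of the ambient module. -/
noncomputable def projEndo {p q : Submodule R M} (h : IsCompl p q) : Module.End R M :=
  p.subtype ∘ₗ Submodule.projectionOnto p q h

theorem projEndo_apply_left {p q : Submodule R M} (h : IsCompl p q) {x : M} (hx : x ∈ p) :
    projEndo h x = x := by
  have := Submodule.projectionOnto_apply_left h ⟨x, hx⟩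
  simp only [projEndo, LinearMap.comp_apply]
  rw [show x = ((⟨x, hx⟩ : p) : M) from rfl, this]
  rfl

theorem projEndo_apply_right {p q : Submodule R M} (h : IsCompl p q) {x : M} (hx : x ∈ q) :
    projEndo h x = 0 := by
  simp only [projEndo, LinearMap.comp_apply]
  rw [Submodule.projectionOnto_apply_of_mem_right h hx]
  rfl

theorem projEndo_mem_range {p q : Submodule R M} (h : IsCompl p q) (x : M) :
    projEndo h x ∈ p := (Submodule.linearProjOfIsCompl p q h x).2

theorem projEndo_range {p q : Submodule R M} (h : IsCompl p q) :
    LinearMap.range (projEndo h) = p := by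
  apply le_antisymm
  · rintro x ⟨y, rfl⟩
    exact projEndo_mem_range h y
  · intro x hx
    exact ⟨x, projEndo_apply_left h hx⟩

theorem projEndo_ker {p q : Submodule R M} (h : IsCompl p q) :
    LinearMap.ker (projEndo h) = q := by
  ext x
  rw [LinearMap.mem_ker]
  constructor
  · intro hx
    simp only [projEndo, LinearMap.comp_apply] at hx
    have : Submodule.projectionOnto p q h x = 0 := Subtype.ext hx
    rwa [Submodule.projectionOnto_apply_eq_zero_iff h] at this
  · intro hx
    exact projEndo_apply_right h hx

theorem projEndo_idem {p q : Submodule R M} (h : IsCompl p q) :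
    projEndo h ∘ₗ projEndo h = projEndo h := by
  ext x
  exact projEndo_apply_left h (projEndo_mem_range h x)

theorem projEndo_sub_mem {p q : Submodule R M} (h : IsCompl p q) (x : M) :
    x - projEndo h x ∈ q := by
  have : projEndo h (x - projEndo h x) = 0 := by
    rw [map_sub, projEndo_apply_left h (projEndo_mem_range h x), sub_self]
  have hk : x - projEndo h x ∈ LinearMap.ker (projEndo h) := this
  rwa [projEndo_ker h] at hk

end Idem

end CSRickartPaper
namespace CSRickartPaper

section Main

variable {R : Type*} [Ring R] {M : Type*} [AddCommGroup M] [Module R M]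
variable {n : ℕ} {𝕄 : Fin n → Submodule R M}

/-- The `j`-th coordinate projection of an internal direct sum, as an endomorphism. -/
noncomputable def cpj (hdec : DirectSum.IsInternal 𝕄) (j : Fin n) : Module.End R M :=
  (𝕄 j).subtype ∘ₗ (DirectSum.component R (Fin n) (fun i => ↥(𝕄 i)) j) ∘ₗ
    (LinearEquiv.ofBijective (DirectSum.coeLinearMap 𝕄) hdec).symm.toLinearMap

theorem cpj_mem (hdec : DirectSum.IsInternal 𝕄) (j : Fin n) (x : M) :
    cpj hdec j x ∈ 𝕄 j := by
  simp only [cpj, LinearMap.comp_apply]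
  exact Submodule.coe_mem _

theorem cpj_apply_same (hdec : DirectSum.IsInternal 𝕄) {j : Fin n} {x : M} (hx : x ∈ 𝕄 j) :
    cpj hdec j x = x := by
  simp only [cpj, LinearMap.comp_apply, LinearEquiv.coe_coe]
  rw [show (DirectSum.component R (Fin n) (fun i => ↥(𝕄 i)) j)
      ((LinearEquiv.ofBijective (DirectSum.coeLinearMap 𝕄) hdec).symm x)
      = (LinearEquiv.ofBijective (DirectSum.coeLinearMap 𝕄) hdec).symm x j from rfl]
  rw [hdec.ofBijective_coeLinearMap_of_mem hx]
  rfl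

theorem cpj_apply_ne (hdec : DirectSum.IsInternal 𝕄) {i j : Fin n} (hij : i ≠ j) {x : M}
    (hx : x ∈ 𝕄 i) : cpj hdec j x = 0 := by
  simp only [cpj, LinearMap.comp_apply, LinearEquiv.coe_coe]
  rw [show (DirectSum.component R (Fin n) (fun i => ↥(𝕄 i)) j)
      ((LinearEquiv.ofBijective (DirectSum.coeLinearMap 𝕄) hdec).symm x)
      = (LinearEquiv.ofBijective (DirectSum.coeLinearMap 𝕄) hdec).symm x j from rfl]
  rw [hdec.ofBijective_coeLinearMap_of_mem_ne hij hx]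
  rfl

theorem sum_cpj (hdec : DirectSum.IsInternal 𝕄) (x : M) :
    ∑ j, cpj hdec j x = x := by
  classical
  set E := LinearEquiv.ofBijective (DirectSum.coeLinearMap 𝕄) hdec with hE
  have hx : x = DirectSum.coeLinearMap 𝕄 (E.symm x) := by
    rw [show DirectSum.coeLinearMap 𝕄 (E.symm x) = E (E.symm x) from rfl,
      LinearEquiv.apply_symm_apply]
  conv_rhs => rw [hx]
  rw [← DirectSum.sum_univ_of (E.symm x), map_sum]
  refine Finset.sum_congr rfl fun j _ => ?_
  rw [DirectSum.coeLinearMap_of]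
  rfl

/-- Partial internal sums. -/
def msup (𝕄 : Fin n → Submodule R M) (s : Finset (Fin n)) : Submodule R M := ⨆ j ∈ s, 𝕄 j

theorem le_msup {s : Finset (Fin n)} {j : Fin n} (hj : j ∈ s) : 𝕄 j ≤ msup 𝕄 s :=
  le_biSup 𝕄 hj

theorem mem_msup (hdec : DirectSum.IsInternal 𝕄) {s : Finset (Fin n)} {x : M} :
    x ∈ msup 𝕄 s ↔ ∀ k ∉ s, cpj hdec k x = 0 := by
  constructor
  · intro hx k hk
    have : msup 𝕄 s ≤ LinearMap.ker (cpj hdec k) := by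
      refine iSup_le fun j => iSup_le fun hj => ?_
      intro y hy
      have hjk : j ≠ k := fun h => hk (h ▸ hj)
      exact LinearMap.mem_ker.mpr (cpj_apply_ne hdec hjk hy)
    exact LinearMap.mem_ker.mp (this hx)
  · intro h
    have hx : ∑ j ∈ s, cpj hdec j x = x := by
      conv_rhs => rw [← sum_cpj hdec x]
      exact Finset.sum_subset (Finset.subset_univ s) fun k _ hk => h k hk
    rw [← hx]
    exact Submodule.sum_mem _ fun j hj => le_msup hj (cpj_mem hdec j x)

theorem msup_disjoint (hdec : DirectSum.IsInternal 𝕄) {s t : Finset (Fin n)}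
    (hst : Disjoint s t) : msup 𝕄 s ⊓ msup 𝕄 t = ⊥ := by
  rw [eq_bot_iff]
  intro x hx
  rw [Submodule.mem_inf] at hx
  rw [Submodule.mem_bot]
  rw [← sum_cpj hdec x]
  refine Finset.sum_eq_zero fun k _ => ?_
  by_cases hks : k ∈ s
  · exact (mem_msup hdec).mp hx.2 k (Finset.disjoint_left.mp hst hks)
  · exact (mem_msup hdec).mp hx.1 k hks

theorem msup_union {s t : Finset (Fin n)} :
    msup 𝕄 (s ∪ t) = msup 𝕄 s ⊔ msup 𝕄 t := by
  apply le_antisymm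
  · refine iSup_le fun j => iSup_le fun hj => ?_
    rcases Finset.mem_union.mp hj with h | h
    · exact (le_msup h).trans le_sup_left
    · exact (le_msup h).trans le_sup_right
  · refine sup_le ?_ ?_ <;>
      exact iSup_le fun j => iSup_le fun hj => le_msup (by simp [hj])

theorem msup_singleton {i : Fin n} : msup 𝕄 {i} = 𝕄 i := by
  simp [msup]

theorem msup_insert {i : Fin n} {s : Finset (Fin n)} :
    msup 𝕄 (insert i s) = 𝕄 i ⊔ msup 𝕄 s := by
  rw [Finset.insert_eq, msup_union, msup_singleton]

theorem msup_univ (hdec : DirectSum.IsInternal 𝕄) : msup 𝕄 Finset.univ = ⊤ := by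
  have := hdec.submodule_iSup_eq_top
  rw [← this]
  simp [msup]

theorem msup_compl_isCompl (hdec : DirectSum.IsInternal 𝕄) (s : Finset (Fin n)) :
    IsCompl (msup 𝕄 s) (msup 𝕄 sᶜ) := by
  constructor
  · rw [disjoint_iff]
    exact msup_disjoint hdec (disjoint_compl_right)
  · rw [codisjoint_iff, ← msup_union, Finset.union_compl, msup_univ hdec]

theorem isCompl_of_partition (hdec : DirectSum.IsInternal 𝕄) {i : Fin n}
    {X₀ X₁ : Submodule R M} (hsup : X₀ ⊔ X₁ = 𝕄 i) (hinf : X₀ ⊓ X₁ = ⊥) :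
    IsCompl X₀ (X₁ ⊔ msup 𝕄 {i}ᶜ) := by
  have hX₀ : X₀ ≤ 𝕄 i := le_sup_left.trans hsup.le
  have hX₁ : X₁ ≤ 𝕄 i := le_sup_right.trans hsup.le
  have hdisj : 𝕄 i ⊓ msup 𝕄 {i}ᶜ = ⊥ := by
    rw [← msup_singleton (𝕄 := 𝕄) (i := i)]
    exact msup_disjoint hdec (disjoint_compl_right)
  constructor
  · rw [disjoint_iff, eq_bot_iff]
    intro x hx
    rw [Submodule.mem_inf] at hx
    obtain ⟨x₁, hx₁, r, hr, hxr⟩ := Submodule.mem_sup.mp hx.2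
    have hrr : r = 0 := by
      refine mem_bot_of_inf_eq_bot hdisj ?_ hr
      have : r = x - x₁ := by rw [← hxr]; abel
      rw [this]
      exact Submodule.sub_mem _ (hX₀ hx.1) (hX₁ hx₁)
    have : x = x₁ := by rw [← hxr, hrr, add_zero]
    rw [Submodule.mem_bot]
    exact mem_bot_of_inf_eq_bot hinf hx.1 (this ▸ hx₁)
  · rw [codisjoint_iff, ← sup_assoc, hsup, ← msup_singleton (𝕄 := 𝕄) (i := i),
      ← msup_union, Finset.union_compl, msup_univ hdec]

end Main

end CSRickartPaper
namespace CSRickartPaper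

section MainD

set_option maxHeartbeats 1000000

variable {R : Type*} [Ring R] {M : Type*} [AddCommGroup M] [Module R M]
variable {n : ℕ} {𝕄 : Fin n → Submodule R M}

/-- Ambient form of the relative CS-Rickart hypothesis. -/
theorem hrelAmb (hrel : ∀ i j, IsRelCSRickart R (𝕄 i) (𝕄 j)) (i j : Fin n)
    (f : Module.End R M) (hf : LinearMap.range f ≤ 𝕄 j) :
    ∃ A₀ A₁ : Submodule R M, A₀ ⊔ A₁ = 𝕄 i ∧ A₀ ⊓ A₁ = ⊥ ∧
      EssentialIn (LinearMap.ker f ⊓ 𝕄 i) A₀ := by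
  set f' : ↥(𝕄 i) →ₗ[R] ↥(𝕄 j) :=
    LinearMap.codRestrict (𝕄 j) (f ∘ₗ (𝕄 i).subtype) (fun x => hf ⟨_, rfl⟩) with hf'
  obtain ⟨e, he, hess⟩ := hrel i j f'
  have hee : e ∘ₗ e = e := by rw [← Module.End.mul_eq_comp]; exact he
  have hcompl := isCompl_of_idem hee
  refine ⟨(LinearMap.range e).map (𝕄 i).subtype, (LinearMap.ker e).map (𝕄 i).subtype, ?_, ?_, ?_⟩
  · rw [← Submodule.map_sup, codisjoint_iff.mp hcompl.2, Submodule.map_subtype_top]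
  · rw [← Submodule.map_inf _ (Submodule.injective_subtype _), disjoint_iff.mp hcompl.1,
      Submodule.map_bot]
  · have htrans := ess_map_subtype hess
    have hker : (LinearMap.ker f').map (𝕄 i).subtype = LinearMap.ker f ⊓ 𝕄 i := by
      rw [hf', LinearMap.ker_codRestrict, LinearMap.ker_comp, Submodule.map_comap_subtype,
        inf_comm]
    rwa [hker] at htrans

theorem kerInf_ess (hdec : DirectSum.IsInternal 𝕄)
    (hrel : ∀ i j, IsRelCSRickart R (𝕄 i) (𝕄 j)) (i : Fin n) (f : Module.End R M)
    (s : Finset (Fin n)) :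
    ∃ X₀ X₁ : Submodule R M, X₀ ⊔ X₁ = 𝕄 i ∧ X₀ ⊓ X₁ = ⊥ ∧
      EssentialIn ((⨅ j ∈ s, LinearMap.ker (cpj hdec j ∘ₗ f)) ⊓ 𝕄 i) X₀ := by
  classical
  induction s using Finset.induction_on with
  | empty =>
      refine ⟨𝕄 i, ⊥, by simp, by simp, ?_⟩
      have : (⨅ j ∈ (∅ : Finset (Fin n)), LinearMap.ker (cpj hdec j ∘ₗ f)) ⊓ 𝕄 i = 𝕄 i := by
        simp
      rw [this]
      exact ess_refl _
  | @insert j₀ s hj₀ IH =>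
      obtain ⟨X₀, X₁, hsup, hinf, hess⟩ := IH
      have hX₀ : X₀ ≤ 𝕄 i := le_sup_left.trans hsup.le
      have hX₁ : X₁ ≤ 𝕄 i := le_sup_right.trans hsup.le
      set hc := isCompl_of_partition hdec hsup hinf with hhc
      set p : Module.End R M := projEndo hc with hp
      set f1 : Module.End R M := cpj hdec j₀ ∘ₗ f with hf1
      set ft : Module.End R M := f1 ∘ₗ p with hft
      have hftrange : LinearMap.range ft ≤ 𝕄 j₀ := by
        rintro x ⟨y, rfl⟩
        exact cpj_mem hdec j₀ _
      obtain ⟨A₀, A₁, hAsup, hAinf, hAess⟩ := hrelAmb hrel i j₀ ft hftrange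
      have hA₀ : A₀ ≤ 𝕄 i := le_sup_left.trans hAsup.le
      -- X₁ ≤ A₀
      have hX₁ker : X₁ ≤ LinearMap.ker ft := by
        intro x hx
        rw [LinearMap.mem_ker, hft, LinearMap.comp_apply,
          projEndo_apply_right hc (Submodule.mem_sup_left hx), map_zero]
      have hX₁A₀ : X₁ ≤ A₀ := fun x hx =>
        hAess.1 (Submodule.mem_inf.mpr ⟨hX₁ker hx, hX₁ hx⟩)
      -- A₀ = (A₀ ⊓ X₀) ⊔ X₁
      have hA₁le : A₁ ≤ 𝕄 i := le_sup_right.trans hAsup.le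
      have hA₀eq : A₀ = X₁ ⊔ (X₀ ⊓ A₀) := by
        have h5 := sup_inf_assoc_of_le (α := Submodule R M) (x := X₁) (z := A₀) X₀ hX₁A₀
        rw [sup_comm X₁ X₀, hsup, inf_eq_right.mpr hA₀] at h5
        exact h5
      refine ⟨A₀ ⊓ X₀, A₁ ⊔ X₁, ?_, ?_, ?_⟩
      · apply le_antisymm
        · exact sup_le (inf_le_left.trans hA₀) (sup_le hA₁le hX₁)
        · rw [← hAsup]
          have h6 : X₀ ⊓ A₀ ≤ A₀ ⊓ X₀ ⊔ (A₁ ⊔ X₁) := by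
            rw [inf_comm X₀ A₀]
            exact le_sup_left
          have h7 : X₁ ≤ A₀ ⊓ X₀ ⊔ (A₁ ⊔ X₁) := le_sup_right.trans le_sup_right
          have h8 : A₀ ≤ A₀ ⊓ X₀ ⊔ (A₁ ⊔ X₁) := hA₀eq.le.trans (sup_le h7 h6)
          exact sup_le h8 (le_sup_left.trans le_sup_right)
      · rw [eq_bot_iff]
        intro x hx
        rw [Submodule.mem_inf] at hx
        obtain ⟨a₁, ha₁, x₁, hx₁, hax⟩ := Submodule.mem_sup.mp hx.2
        have ha₁0 : a₁ = 0 := by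
          refine mem_bot_of_inf_eq_bot hAinf ?_ ha₁
          have : a₁ = x - x₁ := by rw [← hax]; abel
          rw [this]
          exact Submodule.sub_mem _ (Submodule.mem_inf.mp hx.1).1 (hX₁A₀ hx₁)
        have hxx₁ : x = x₁ := by rw [← hax, ha₁0, zero_add]
        rw [Submodule.mem_bot]
        have hx₁' : x ∈ X₁ := by rw [hxx₁]; exact hx₁
        exact mem_bot_of_inf_eq_bot hinf (Submodule.mem_inf.mp hx.1).2 hx₁'
      · -- essentiality chain
        have hiInf : (⨅ j ∈ insert j₀ s, LinearMap.ker (cpj hdec j ∘ₗ f))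
            = LinearMap.ker f1 ⊓ ⨅ j ∈ s, LinearMap.ker (cpj hdec j ∘ₗ f) := by
          rw [Finset.iInf_insert]
        set Ns : Submodule R M := (⨅ j ∈ s, LinearMap.ker (cpj hdec j ∘ₗ f)) ⊓ 𝕄 i with hNs
        -- ker f1 ⊓ X₀ = ker ft ⊓ X₀
        have hker1 : LinearMap.ker f1 ⊓ X₀ = LinearMap.ker ft ⊓ X₀ := by
          ext x
          rw [Submodule.mem_inf, Submodule.mem_inf]
          constructor
          · rintro ⟨hk, hx⟩
            refine ⟨?_, hx⟩
            rw [LinearMap.mem_ker, hft, LinearMap.comp_apply, projEndo_apply_left hc hx]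
            exact hk
          · rintro ⟨hk, hx⟩
            refine ⟨?_, hx⟩
            rw [LinearMap.mem_ker, hft, LinearMap.comp_apply, projEndo_apply_left hc hx] at hk
            exact hk
        -- ker ft ⊓ X₀ ≤e A₀ ⊓ X₀
        have h2 : EssentialIn (LinearMap.ker ft ⊓ X₀) (A₀ ⊓ X₀) := by
          have := ess_inf hAess (inf_le_left : A₀ ⊓ X₀ ≤ A₀)
          have heq : LinearMap.ker ft ⊓ 𝕄 i ⊓ (A₀ ⊓ X₀) = LinearMap.ker ft ⊓ X₀ := by
            apply le_antisymm
            · intro x hx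
              rw [Submodule.mem_inf] at hx
              exact Submodule.mem_inf.mpr ⟨(Submodule.mem_inf.mp hx.1).1,
                (Submodule.mem_inf.mp hx.2).2⟩
            · intro x hx
              rw [Submodule.mem_inf] at hx
              have hmi : x ∈ 𝕄 i := hX₀ hx.2
              have hA : x ∈ A₀ := hAess.1 (Submodule.mem_inf.mpr ⟨hx.1, hmi⟩)
              exact Submodule.mem_inf.mpr ⟨Submodule.mem_inf.mpr ⟨hx.1, hmi⟩,
                Submodule.mem_inf.mpr ⟨hA, hx.2⟩⟩
          rwa [heq] at this
        -- Ns ⊓ (ker f1 ⊓ X₀) ≤e ker f1 ⊓ X₀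
        have h3 : EssentialIn (Ns ⊓ (LinearMap.ker f1 ⊓ X₀)) (LinearMap.ker f1 ⊓ X₀) :=
          ess_inf hess inf_le_right
        have h4 : Ns ⊓ (LinearMap.ker f1 ⊓ X₀)
            = (⨅ j ∈ insert j₀ s, LinearMap.ker (cpj hdec j ∘ₗ f)) ⊓ 𝕄 i := by
          rw [hiInf]
          apply le_antisymm
          · intro x hx
            rw [Submodule.mem_inf] at hx
            obtain ⟨hxN, hxk⟩ := hx
            rw [Submodule.mem_inf] at hxN hxk
            exact Submodule.mem_inf.mpr ⟨Submodule.mem_inf.mpr ⟨hxk.1, hxN.1⟩, hxN.2⟩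
          · intro x hx
            rw [Submodule.mem_inf] at hx
            obtain ⟨hxk, hmi⟩ := hx
            rw [Submodule.mem_inf] at hxk
            have hxX₀ : x ∈ X₀ := hess.1 (Submodule.mem_inf.mpr ⟨hxk.2, hmi⟩)
            exact Submodule.mem_inf.mpr ⟨Submodule.mem_inf.mpr ⟨hxk.2, hmi⟩,
              Submodule.mem_inf.mpr ⟨hxk.1, hxX₀⟩⟩
        rw [← h4]
        refine ess_trans h3 ?_
        rw [hker1]
        exact h2

end MainD

end CSRickartPaper
namespace CSRickartPaper

section MainE

set_option maxHeartbeats 1000000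

variable {R : Type*} [Ring R] {M : Type*} [AddCommGroup M] [Module R M]
variable {n : ℕ} {𝕄 : Fin n → Submodule R M}

theorem ker_ess_summand (hdec : DirectSum.IsInternal 𝕄)
    (hrel : ∀ i j, IsRelCSRickart R (𝕄 i) (𝕄 j)) (i : Fin n) (f : Module.End R M) :
    ∃ X₀ X₁ : Submodule R M, X₀ ⊔ X₁ = 𝕄 i ∧ X₀ ⊓ X₁ = ⊥ ∧
      EssentialIn (LinearMap.ker f ⊓ 𝕄 i) X₀ := by
  obtain ⟨X₀, X₁, h1, h2, h3⟩ := kerInf_ess hdec hrel i f Finset.univ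
  have heq : (⨅ j ∈ Finset.univ, LinearMap.ker (cpj hdec j ∘ₗ f)) = LinearMap.ker f := by
    apply le_antisymm
    · intro x hx
      simp only [Submodule.mem_iInf, LinearMap.mem_ker, LinearMap.comp_apply] at hx
      rw [LinearMap.mem_ker, ← sum_cpj hdec (f x)]
      exact Finset.sum_eq_zero fun j _ => hx j (Finset.mem_univ j)
    · intro x hx
      simp only [Submodule.mem_iInf, LinearMap.mem_ker, LinearMap.comp_apply]
      intro j _
      rw [LinearMap.mem_ker.mp hx, map_zero]
  rw [heq] at h3
  exact ⟨X₀, X₁, h1, h2, h3⟩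

theorem partQ (hdec : DirectSum.IsInternal 𝕄) (hC2 : IsC2 R M)
    (hrel : ∀ i j, IsRelCSRickart R (𝕄 i) (𝕄 j)) (s : Finset (Fin n)) :
    ∀ φ : Module.End R M, ∃ S CS : Submodule R M, IsCompl S CS ∧ S ≤ msup 𝕄 s ∧
      LinearMap.ker φ ⊓ S = ⊥ ∧
      EssentialIn ((LinearMap.ker φ ⊔ S) ⊓ msup 𝕄 s) (msup 𝕄 s) := by
  classical
  induction s using Finset.induction_on with
  | empty =>
      intro φ
      have hbot : msup 𝕄 (∅ : Finset (Fin n)) = ⊥ := by simp [msup]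
      refine ⟨⊥, ⊤, isCompl_bot_top, bot_le, inf_bot_eq _, ?_⟩
      rw [hbot, inf_bot_eq]
      exact ess_refl ⊥
  | @insert i s hi IH =>
      intro φ
      obtain ⟨A₀, A₁, hAsup, hAinf, hAess⟩ := ker_ess_summand hdec hrel i φ
      have hA₀ : A₀ ≤ 𝕄 i := le_sup_left.trans hAsup.le
      have hA₁ : A₁ ≤ 𝕄 i := le_sup_right.trans hAsup.le
      have hkerA₁ : LinearMap.ker φ ⊓ A₁ = ⊥ := by
        rw [eq_bot_iff]
        intro x hx
        rw [Submodule.mem_inf] at hx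
        have hxA₀ : x ∈ A₀ := hAess.1 (Submodule.mem_inf.mpr ⟨hx.1, hA₁ hx.2⟩)
        rw [Submodule.mem_bot]
        exact mem_bot_of_inf_eq_bot hAinf hxA₀ hx.2
      have hA₁compl : IsCompl A₁ (A₀ ⊔ msup 𝕄 {i}ᶜ) :=
        isCompl_of_partition hdec (by rw [sup_comm]; exact hAsup)
          (by rw [inf_comm]; exact hAinf)
      have hinj : Function.Injective (φ ∘ₗ A₁.subtype) := by
        rw [← LinearMap.ker_eq_bot, eq_bot_iff]
        intro x hx
        rw [LinearMap.mem_ker, LinearMap.comp_apply] at hx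
        rw [Submodule.mem_bot]
        apply Subtype.ext
        have : (x : M) ∈ LinearMap.ker φ ⊓ A₁ :=
          Submodule.mem_inf.mpr ⟨LinearMap.mem_ker.mpr hx, x.2⟩
        rw [hkerA₁] at this
        simpa using this
      set F : Submodule R M := LinearMap.range (φ ∘ₗ A₁.subtype) with hF
      have hiso : Nonempty (↥F ≃ₗ[R] ↥A₁) := ⟨(LinearEquiv.ofInjective _ hinj).symm⟩
      obtain ⟨C, hFC⟩ := hC2 F A₁ ⟨_, hA₁compl⟩ hiso
      set π : Module.End R M := projEndo hFC.symm with hπ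
      set φ' : Module.End R M := π ∘ₗ φ with hφ'
      have hφ'apply : ∀ x : M, φ' x = π (φ x) := fun x => rfl
      have hkerπ : LinearMap.ker π = F := projEndo_ker hFC.symm
      have hkerφ'sub : LinearMap.ker φ ≤ LinearMap.ker φ' := by
        intro x hx
        rw [LinearMap.mem_ker, hφ'apply, LinearMap.mem_ker.mp hx, map_zero]
      have hA₁kerφ' : A₁ ≤ LinearMap.ker φ' := by
        intro x hx
        rw [LinearMap.mem_ker, hφ'apply]
        have hφx : φ x ∈ F := ⟨⟨x, hx⟩, rfl⟩
        rw [← hkerπ] at hφx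
        exact hφx
      have hkerφ' : LinearMap.ker φ' = LinearMap.ker φ ⊔ A₁ := by
        apply le_antisymm
        · intro x hx
          have h0 : π (φ x) = 0 := LinearMap.mem_ker.mp hx
          have hφx : φ x ∈ F := by
            rw [← hkerπ]
            exact LinearMap.mem_ker.mpr h0
          obtain ⟨a, ha⟩ := hφx
          have hsub : x - (a : M) ∈ LinearMap.ker φ := by
            rw [LinearMap.mem_ker, map_sub, show φ (a : M) = φ x from ha, sub_self]
          have hxeq : x = (x - (a : M)) + (a : M) := by abel
          rw [hxeq]
          exact Submodule.add_mem_sup hsub a.2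
        · exact sup_le hkerφ'sub hA₁kerφ'
      obtain ⟨S', C', hS'compl, hS'le, hS'ker, hS'ess⟩ := IH φ'
      have hmsups : msup 𝕄 s = S' ⊔ (C' ⊓ msup 𝕄 s) := by
        have h9 := sup_inf_assoc_of_le (α := Submodule R M) C' hS'le
        rw [codisjoint_iff.mp hS'compl.2, top_inf_eq] at h9
        exact h9
      -- Finset facts
      have hfin1 : (insert i s)ᶜ ∪ {i} = sᶜ := by
        ext k
        by_cases hk : k = i <;> simp [hk, hi, Finset.mem_insert]
      have hdisj1 : 𝕄 i ⊓ msup 𝕄 (insert i s)ᶜ = ⊥ := by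
        rw [← msup_singleton (𝕄 := 𝕄) (i := i), inf_comm]
        refine msup_disjoint hdec ?_
        rw [Finset.disjoint_singleton_right]
        intro hmem
        exact (Finset.mem_compl.mp hmem) (Finset.mem_insert_self i s)
      have hdisj2 : msup 𝕄 s ⊓ msup 𝕄 (sᶜ) = ⊥ :=
        msup_disjoint hdec disjoint_compl_right
      have hdisj3 : msup 𝕄 s ⊓ 𝕄 i = ⊥ := by
        rw [← msup_singleton (𝕄 := 𝕄) (i := i)]
        exact msup_disjoint hdec (Finset.disjoint_singleton_right.mpr hi)
      refine ⟨S' ⊔ A₁, (C' ⊓ msup 𝕄 s) ⊔ (A₀ ⊔ msup 𝕄 (insert i s)ᶜ), ⟨?_, ?_⟩, ?_, ?_, ?_⟩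
      · -- disjointness
        rw [disjoint_iff, eq_bot_iff]
        intro x hx
        rw [Submodule.mem_inf] at hx
        obtain ⟨s', hs', a₁, ha₁, hxsum⟩ := Submodule.mem_sup.mp hx.1
        obtain ⟨c, hc, w, hw, hxsum2⟩ := Submodule.mem_sup.mp hx.2
        obtain ⟨a₀, ha₀, r, hr, hwsum⟩ := Submodule.mem_sup.mp hw
        have hceq : c ∈ C' ⊓ msup 𝕄 s := hc
        have hcs : c ∈ msup 𝕄 s := (Submodule.mem_inf.mp hceq).2
        have hu : s' - c ∈ msup 𝕄 s := Submodule.sub_mem _ (hS'le hs') hcs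
        have hv : a₁ - a₀ ∈ 𝕄 i := Submodule.sub_mem _ (hA₁ ha₁) (hA₀ ha₀)
        have hsum : (s' - c) + (a₁ - a₀) = r := by
          have : s' + a₁ = c + (a₀ + r) := by rw [hxsum, ← hxsum2, hwsum]
          have h' : (s' - c) + (a₁ - a₀) = (s' + a₁) - (c + a₀) := by abel
          rw [h', this]
          abel
        have hrsc : r ∈ msup 𝕄 sᶜ := by
          rw [← hfin1, msup_union]
          exact Submodule.mem_sup_left hr
        have hu0 : s' - c = 0 := by
          refine mem_bot_of_inf_eq_bot hdisj2 hu ?_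
          have : s' - c = r - (a₁ - a₀) := by rw [← hsum]; abel
          rw [this, ← hfin1, msup_union]
          refine Submodule.sub_mem _ (Submodule.mem_sup_left hr) ?_
          rw [← msup_singleton (𝕄 := 𝕄) (i := i)] at hv
          exact Submodule.mem_sup_right hv
        have hs'c : s' = c := sub_eq_zero.mp hu0
        have hs'0 : s' = 0 := by
          refine mem_bot_of_inf_eq_bot (disjoint_iff.mp hS'compl.1) hs' ?_
          rw [hs'c]
          exact (Submodule.mem_inf.mp hceq).1
        have hv0 : a₁ - a₀ = 0 := by
          refine mem_bot_of_inf_eq_bot hdisj1 hv ?_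
          rw [show a₁ - a₀ = r - (s' - c) by rw [← hsum]; abel, hu0, sub_zero]
          exact hr
        have ha₁a₀ : a₁ = a₀ := sub_eq_zero.mp hv0
        have ha₁0 : a₁ = 0 := mem_bot_of_inf_eq_bot (by rw [inf_comm]; exact hAinf) ha₁
          (ha₁a₀ ▸ ha₀)
        rw [Submodule.mem_bot, ← hxsum, hs'0, ha₁0, add_zero]
      · -- codisjointness
        rw [codisjoint_iff, eq_top_iff]
        have htop : msup 𝕄 (insert i s) ⊔ msup 𝕄 (insert i s)ᶜ = ⊤ :=
          codisjoint_iff.mp (msup_compl_isCompl hdec (insert i s)).2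
        rw [← htop]
        have hA0le : A₀ ≤ (S' ⊔ A₁) ⊔ ((C' ⊓ msup 𝕄 s) ⊔ (A₀ ⊔ msup 𝕄 (insert i s)ᶜ)) :=
          fun x hx => Submodule.mem_sup_right (Submodule.mem_sup_right (Submodule.mem_sup_left hx))
        have hA1le : A₁ ≤ (S' ⊔ A₁) ⊔ ((C' ⊓ msup 𝕄 s) ⊔ (A₀ ⊔ msup 𝕄 (insert i s)ᶜ)) :=
          fun x hx => Submodule.mem_sup_left (Submodule.mem_sup_right hx)
        have hS'le2 : S' ≤ (S' ⊔ A₁) ⊔ ((C' ⊓ msup 𝕄 s) ⊔ (A₀ ⊔ msup 𝕄 (insert i s)ᶜ)) :=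
          fun x hx => Submodule.mem_sup_left (Submodule.mem_sup_left hx)
        have hC'le : C' ⊓ msup 𝕄 s ≤ (S' ⊔ A₁) ⊔ ((C' ⊓ msup 𝕄 s) ⊔ (A₀ ⊔ msup 𝕄 (insert i s)ᶜ)) :=
          fun x hx => Submodule.mem_sup_right (Submodule.mem_sup_left hx)
        have hrestle : msup 𝕄 (insert i s)ᶜ ≤
            (S' ⊔ A₁) ⊔ ((C' ⊓ msup 𝕄 s) ⊔ (A₀ ⊔ msup 𝕄 (insert i s)ᶜ)) :=
          fun x hx => Submodule.mem_sup_right (Submodule.mem_sup_right (Submodule.mem_sup_right hx))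
        have hMile : 𝕄 i ≤ (S' ⊔ A₁) ⊔ ((C' ⊓ msup 𝕄 s) ⊔ (A₀ ⊔ msup 𝕄 (insert i s)ᶜ)) := by
          rw [← hAsup]; exact sup_le hA0le hA1le
        have hmsle : msup 𝕄 s ≤ (S' ⊔ A₁) ⊔ ((C' ⊓ msup 𝕄 s) ⊔ (A₀ ⊔ msup 𝕄 (insert i s)ᶜ)) := by
          exact hmsups.le.trans (sup_le hS'le2 hC'le)
        refine sup_le ?_ hrestle
        rw [msup_insert]
        exact sup_le hMile hmsle
      · -- S ≤ msup (insert i s)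
        rw [msup_insert]
        exact sup_le (hS'le.trans le_sup_right) (hA₁.trans le_sup_left)
      · -- ker φ ⊓ S = ⊥
        rw [eq_bot_iff]
        intro x hx
        rw [Submodule.mem_inf] at hx
        obtain ⟨s', hs', a₁, ha₁, hxsum⟩ := Submodule.mem_sup.mp hx.2
        have hs'0 : s' = 0 := by
          refine mem_bot_of_inf_eq_bot hS'ker ?_ hs'
          have : s' = x - a₁ := by rw [← hxsum]; abel
          rw [this]
          exact Submodule.sub_mem _ (hkerφ'sub hx.1) (hA₁kerφ' ha₁)
        have hxa₁ : x = a₁ := by rw [← hxsum, hs'0, zero_add]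
        rw [Submodule.mem_bot]
        exact mem_bot_of_inf_eq_bot hkerA₁ hx.1 (hxa₁ ▸ ha₁)
      · -- essentiality
        have hE : LinearMap.ker φ ⊔ (S' ⊔ A₁) = LinearMap.ker φ' ⊔ S' := by
          rw [hkerφ', sup_assoc, sup_comm A₁ S']
        have hEi : EssentialIn ((LinearMap.ker φ' ⊔ S') ⊓ 𝕄 i) (𝕄 i) := by
          have hsmall : EssentialIn ((LinearMap.ker φ ⊓ 𝕄 i) ⊔ A₁) (𝕄 i) := by
            have := ess_sup hAess (ess_refl A₁) hAinf
            rwa [hAsup] at this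
          refine ess_mono_left hsmall ?_ inf_le_right
          refine sup_le (le_inf ?_ inf_le_right) (le_inf ?_ hA₁)
          · exact inf_le_left.trans (hkerφ'sub.trans le_sup_left)
          · exact hA₁kerφ'.trans le_sup_left
        have hcomb := ess_sup hS'ess hEi hdisj3
        have hmsupins : msup 𝕄 s ⊔ 𝕄 i = msup 𝕄 (insert i s) := by
          rw [msup_insert, sup_comm]
        rw [hmsupins] at hcomb
        rw [hE]
        refine ess_mono_left hcomb ?_ inf_le_right
        refine sup_le ?_ ?_
        · exact le_inf inf_le_left (inf_le_right.trans (by rw [← hmsupins]; exact le_sup_left))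
        · exact le_inf inf_le_left (inf_le_right.trans (by rw [← hmsupins]; exact le_sup_right))

end MainE

end CSRickartPaper
namespace CSRickartPaper

set_option maxHeartbeats 1000000 in
/-- If `M = M₁ ⊕ … ⊕ Mₙ` satisfies C₂ and each `Mᵢ` is relatively CS-Rickart to
each `Mⱼ`, then `M` is CS-Rickart. -/
theorem c2_relCSRickart_directSum
    {R : Type*} [Ring R] {M : Type*} [AddCommGroup M] [Module R M]
    {n : ℕ} (𝕄 : Fin n → Submodule R M) (hdec : DirectSum.IsInternal 𝕄)
    (hC2 : IsC2 R M)
    (hrel : ∀ i j, IsRelCSRickart R (𝕄 i) (𝕄 j)) :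
    IsCSRickart R M := by
  intro φ
  obtain ⟨S, CS, hcompl, hSle, hker, hessTop⟩ := partQ hdec hC2 hrel Finset.univ φ
  rw [msup_univ hdec, inf_top_eq] at hessTop
  have hcs : IsCompl CS S := hcompl.symm
  set p : Module.End R M := projEndo hcs with hp
  have hinj : Function.Injective (φ ∘ₗ S.subtype) := by
    rw [← LinearMap.ker_eq_bot, eq_bot_iff]
    intro x hx
    rw [LinearMap.mem_ker, LinearMap.comp_apply] at hx
    rw [Submodule.mem_bot]
    apply Subtype.ext
    have hm : (x : M) ∈ LinearMap.ker φ ⊓ S :=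
      Submodule.mem_inf.mpr ⟨LinearMap.mem_ker.mpr hx, x.2⟩
    rw [hker] at hm
    simpa using hm
  set F : Submodule R M := LinearMap.range (φ ∘ₗ S.subtype) with hF
  set ε : ↥S ≃ₗ[R] ↥F := LinearEquiv.ofInjective _ hinj with hε
  obtain ⟨C2c, hFC⟩ := hC2 F S ⟨CS, hcompl⟩ ⟨ε.symm⟩
  set σ : M →ₗ[R] ↥F := Submodule.linearProjOfIsCompl F C2c hFC with hσ
  set lam : Module.End R M :=
    S.subtype ∘ₗ (ε.symm : ↥F →ₗ[R] ↥S) ∘ₗ σ ∘ₗ φ ∘ₗ p with hlamdef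
  have hlamS : ∀ x : M, lam x ∈ S := fun x => Submodule.coe_mem _
  have lam_spec : ∀ (x s0 : M) (hs0 : s0 ∈ S), φ (p x) = φ s0 → lam x = s0 := by
    intro x s0 hs0 heq
    have hφs0F : φ s0 ∈ F := ⟨⟨s0, hs0⟩, rfl⟩
    have hεs : ε ⟨s0, hs0⟩ = ⟨φ s0, hφs0F⟩ := Subtype.ext rfl
    have hσval : σ (φ (p x)) = ⟨φ s0, hφs0F⟩ := by
      rw [heq]
      exact Submodule.linearProjOfIsCompl_apply_left hFC ⟨φ s0, hφs0F⟩
    show (S.subtype (ε.symm (σ (φ (p x))))) = s0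
    rw [hσval, ← hεs, LinearEquiv.symm_apply_apply]
    rfl
  have hlam0 : ∀ x : M, lam (lam x) = 0 := by
    intro x
    have h1 : p (lam x) = 0 := projEndo_apply_right hcs (hlamS x)
    refine lam_spec (lam x) 0 (zero_mem S) ?_
    rw [h1, map_zero]
  set u : Module.End R M := LinearMap.id - lam with hu
  set v : Module.End R M := LinearMap.id + lam with hv
  have huap : ∀ x : M, u x = x - lam x := fun x => rfl
  have hvap : ∀ x : M, v x = x + lam x := fun x => rfl
  have huv : ∀ x : M, u (v x) = x := by
    intro x
    rw [hvap, huap, map_add, hlam0 x, add_zero]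
    abel
  have hvu : ∀ x : M, v (u x) = x := by
    intro x
    rw [huap, hvap, map_sub, hlam0 x, sub_zero]
    abel
  set U : M ≃ₗ[R] M := LinearEquiv.ofLinear u v (LinearMap.ext huv) (LinearMap.ext hvu) with hU
  set e : Module.End R M := u ∘ₗ p ∘ₗ v with he
  have heap : ∀ x : M, e x = u (p (v x)) := fun x => rfl
  have hid : IsIdempotentElem e := by
    apply LinearMap.ext
    intro x
    rw [Module.End.mul_apply]
    calc e (e x) = u (p (v (u (p (v x))))) := rfl
      _ = u (p (p (v x))) := by rw [hvu (p (v x))]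
      _ = u (p (v x)) := by rw [projEndo_apply_left hcs (projEndo_mem_range hcs (v x))]
      _ = e x := rfl
  have hrange : LinearMap.range e = CS.map u := by
    apply le_antisymm
    · rintro y ⟨x, rfl⟩
      exact ⟨p (v x), projEndo_mem_range hcs (v x), rfl⟩
    · rintro y ⟨x, hx, rfl⟩
      refine ⟨u x, ?_⟩
      rw [heap, hvu, projEndo_apply_left hcs hx]
  set K₀ : Submodule R M := (LinearMap.ker φ ⊔ S) ⊓ CS with hK₀
  have hK₀ess : EssentialIn K₀ CS := ess_inf hessTop le_top
  have hmapK₀ : K₀.map u = LinearMap.ker φ := by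
    apply le_antisymm
    · rintro y ⟨x, hx, rfl⟩
      have hx2 : x ∈ (LinearMap.ker φ ⊔ S) ⊓ CS := hx
      rw [Submodule.mem_inf] at hx2
      obtain ⟨k, hk, s0, hs0, hks⟩ := Submodule.mem_sup.mp hx2.1
      have hpx : p x = x := projEndo_apply_left hcs hx2.2
      have hφeq : φ (p x) = φ s0 := by
        rw [hpx, ← hks, map_add, LinearMap.mem_ker.mp hk, zero_add]
      have hlx : lam x = s0 := lam_spec x s0 hs0 hφeq
      rw [LinearMap.mem_ker, huap, hlx, ← hks, add_sub_cancel_right]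
      exact LinearMap.mem_ker.mp hk
    · intro k hk
      have hs0 : p k - k ∈ S := by
        have := projEndo_sub_mem hcs k
        have h' : p k - k = -(k - p k) := by abel
        rw [h']
        exact Submodule.neg_mem _ this
      set x : M := p k with hx
      have hxCS : x ∈ CS := projEndo_mem_range hcs k
      have hxsum : x = k + (p k - k) := by rw [hx]; abel
      have hxmem : x ∈ LinearMap.ker φ ⊔ S := by
        rw [hxsum]
        exact Submodule.add_mem_sup hk hs0
      have hpx : p x = x := projEndo_apply_left hcs hxCS
      have hφeq : φ (p x) = φ (p k - k) := by
        rw [hpx, hxsum, map_add, LinearMap.mem_ker.mp hk, zero_add]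
      have hlx : lam x = p k - k := lam_spec x _ hs0 hφeq
      refine ⟨x, Submodule.mem_inf.mpr ⟨hxmem, hxCS⟩, ?_⟩
      rw [huap, hlx, hx]
      abel
  refine ⟨e, hid, ?_⟩
  have hUu : (U : M →ₗ[R] M) = u := rfl
  have hfinal := ess_map_equiv U hK₀ess
  rw [hUu, hmapK₀, ← hrange] at hfinal
  exact hfinal

end CSRickartPaper
end

section
/- Let M = M₁ ⊕ … ⊕ Mₙ be a right R-module of finite length. If Hom_R(Soc(M_i), Soc(M_j)) = 0 for each pair of distinct indices i, j ∈ {1,…,n}, and each M_i is an indecomposable CS-Rickart module, then M is a CS-Rickart module. -/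
namespace CSRickartPaper

/-- The socle of a submodule `N` of `M`: the sum of all simple submodules
contained in `N`. -/
def socIn {R : Type*} [Ring R] {M : Type*} [AddCommGroup M] [Module R M]
    (N : Submodule R M) : Submodule R M :=
  sSup {S : Submodule R M | S ≤ N ∧ IsSimpleModule R S}

/-- A module is indecomposable if it is nonzero and admits no nontrivial direct
sum decomposition. -/
def IsIndecomposableModule (R : Type*) [Ring R] (M : Type*) [AddCommGroup M]
    [Module R M] : Prop :=
  Nontrivial M ∧ ∀ A B : Submodule R M, IsCompl A B → A = ⊥ ∨ B = ⊥

section Aux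
variable {R : Type*} [Ring R] {M : Type*} [AddCommGroup M] [Module R M]

theorem map_simple_le_socIn (f : M →ₗ[R] M) {T P : Submodule R M}
    (hT : IsSimpleModule R T) (h : Submodule.map f T ≤ P) :
    Submodule.map f T ≤ socIn P := by
  have hrange : LinearMap.range (f ∘ₗ T.subtype) = Submodule.map f T := by
    rw [LinearMap.range_comp, Submodule.range_subtype]
  haveI := hT
  rcases eq_bot_or_eq_top (LinearMap.ker (f ∘ₗ T.subtype)) with hk | hk
  · have hinj : Function.Injective (f ∘ₗ T.subtype) := LinearMap.ker_eq_bot.mp hk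
    have hsimp : IsSimpleModule R (Submodule.map f T) := by
      rw [← hrange]
      exact IsSimpleModule.congr (LinearEquiv.ofInjective _ hinj).symm
    exact le_sSup (show Submodule.map f T ∈ _ from ⟨h, hsimp⟩)
  · have hz : (f ∘ₗ T.subtype) = 0 := LinearMap.ker_eq_top.mp hk
    rw [← hrange, hz, LinearMap.range_zero]; exact bot_le

theorem map_socIn_le (f : M →ₗ[R] M) {N P : Submodule R M}
    (h : Submodule.map f N ≤ P) :
    Submodule.map f (socIn N) ≤ socIn P := by
  rw [socIn, sSup_eq_iSup', Submodule.map_iSup]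
  exact iSup_le fun T =>
    map_simple_le_socIn f T.prop.2 (le_trans (Submodule.map_mono T.prop.1) h)

theorem apply_socIn_mem (f : M →ₗ[R] M) {N P : Submodule R M}
    (h : ∀ x ∈ N, f x ∈ P) {s : M} (hs : s ∈ socIn N) : f s ∈ socIn P :=
  map_socIn_le f (Submodule.map_le_iff_le_comap.mpr h) (Submodule.mem_map_of_mem hs)

end Aux

/-- If `M = M₁ ⊕ … ⊕ Mₙ` has finite length, `Hom(Soc(Mᵢ), Soc(Mⱼ)) = 0` for all
`i ≠ j`, and each `Mᵢ` is an indecomposable CS-Rickart module, then `M` is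
CS-Rickart. -/
theorem finiteLength_socOrthogonal_indecomposable_csRickart
    {R : Type*} [Ring R] {M : Type*} [AddCommGroup M] [Module R M]
    [IsNoetherian R M] [IsArtinian R M]
    {n : ℕ} (𝕄 : Fin n → Submodule R M) (hdec : DirectSum.IsInternal 𝕄)
    (hsoc : ∀ i j, i ≠ j → ∀ φ : socIn (𝕄 i) →ₗ[R] socIn (𝕄 j), φ = 0)
    (hind : ∀ i, IsIndecomposableModule R (𝕄 i))
    (hcs : ∀ i, IsCSRickart R (𝕄 i)) :
    IsCSRickart R M := by
  classical
  intro φ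
  set E : DirectSum (Fin n) (fun i => ↥(𝕄 i)) ≃ₗ[R] M :=
    LinearEquiv.ofBijective (DirectSum.coeLinearMap 𝕄) hdec with hE
  set π : Fin n → Module.End R M := fun i =>
    (𝕄 i).subtype ∘ₗ (DirectSum.component R (Fin n) (fun i => ↥(𝕄 i)) i) ∘ₗ
      (E.symm : M →ₗ[R] DirectSum (Fin n) (fun i => ↥(𝕄 i))) with hπdef
  have hπ : ∀ i x, π i x = ↑(E.symm x i) := fun i x => rfl
  have hmem : ∀ i (x : M), π i x ∈ 𝕄 i := fun i x => (E.symm x i).2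
  have hid : ∀ i (x : M), x ∈ 𝕄 i → π i x = x := by
    intro i x hx
    rw [hπ]
    exact congrArg Subtype.val (hdec.ofBijective_coeLinearMap_of_mem hx)
  have hne : ∀ i j, i ≠ j → ∀ x ∈ 𝕄 i, π j x = 0 := by
    intro i j hij x hx
    rw [hπ]
    exact congrArg Subtype.val (hdec.ofBijective_coeLinearMap_of_mem_ne hij hx)
  have hsum : ∀ x : M, ∑ i, π i x = x := by
    intro x
    have h1 := DirectSum.sum_univ_of (E.symm x)
    have h2 := congrArg (DirectSum.coeLinearMap 𝕄) h1
    rw [map_sum] at h2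
    simp only [DirectSum.coeLinearMap_of] at h2
    have h3 : DirectSum.coeLinearMap 𝕄 (E.symm x) = x := E.apply_symm_apply x
    rw [h3] at h2
    calc ∑ i, π i x = ∑ i, ((E.symm x i : M)) := by simp only [hπ]
      _ = x := h2

  have hpp : ∀ i (x : M), π i (π i x) = π i x := fun i x => hid i _ (hmem i x)
  have hpq : ∀ i j, i ≠ j → ∀ x : M, π j (π i x) = 0 := fun i j hij x =>
    hne i j hij _ (hmem i x)
  have hatom : ∀ T : Submodule R M, IsSimpleModule R T → ∀ t ∈ T, ∀ i,
      π i t ∈ socIn (𝕄 i) := by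
    intro T hT t ht i
    have h1 : Submodule.map (π i) T ≤ socIn (𝕄 i) :=
      map_simple_le_socIn (π i) hT (fun x hx => by
        rcases hx with ⟨y, hy, rfl⟩; exact hmem i y)
    exact h1 (Submodule.mem_map_of_mem ht)
  have f1 : ∀ i j, i ≠ j → ∀ s ∈ socIn (𝕄 i), π j (φ s) = 0 := by
    intro i j hij s hs
    have hval : ∀ x ∈ 𝕄 i, (π j ∘ₗ φ) x ∈ 𝕄 j := fun x _ => hmem j (φ x)
    set g : ↥(socIn (𝕄 i)) →ₗ[R] ↥(socIn (𝕄 j)) :=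
      LinearMap.codRestrict (socIn (𝕄 j)) ((π j ∘ₗ φ) ∘ₗ (socIn (𝕄 i)).subtype)
        (fun a => apply_socIn_mem (π j ∘ₗ φ) hval a.2) with hg
    have h0 := hsoc i j hij g
    have h1 := congrArg (fun (h : ↥(socIn (𝕄 i)) →ₗ[R] ↥(socIn (𝕄 j))) =>
      ((h ⟨s, hs⟩ : ↥(socIn (𝕄 j))) : M)) h0
    simpa [hg] using h1
  set S : Set (Fin n) := {j | ∃ x, x ∈ 𝕄 j ∧ x ≠ 0 ∧ π j (φ x) = 0} with hS
  have f2 : ∀ j ∈ S, ∀ s ∈ socIn (𝕄 j), π j (φ s) = 0 := by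
    intro j hj
    obtain ⟨x, hxm, hx0, hxk⟩ := hj
    set ψj : Module.End R ↥(𝕄 j) :=
      LinearMap.codRestrict (𝕄 j) ((π j ∘ₗ φ) ∘ₗ (𝕄 j).subtype)
        (fun a => hmem j (φ ↑a)) with hψj
    obtain ⟨ε, hε, hess⟩ := hcs j ψj
    have hker : ψj ⟨x, hxm⟩ = 0 := Subtype.ext (by exact hxk)
    have hcompl : IsCompl (LinearMap.range ε) (LinearMap.ker ε) := by
      constructor
      · rw [disjoint_iff]
        ext y
        simp only [Submodule.mem_inf, LinearMap.mem_range, LinearMap.mem_ker,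
          Submodule.mem_bot]
        constructor
        · rintro ⟨⟨z, rfl⟩, hy⟩
          calc ε z = ε (ε z) := by rw [← Module.End.mul_apply, hε]
            _ = 0 := hy
        · rintro rfl; exact ⟨⟨0, map_zero ε⟩, map_zero ε⟩
      · rw [codisjoint_iff, eq_top_iff]
        intro y _
        have hker' : y - ε y ∈ LinearMap.ker ε := by
          rw [LinearMap.mem_ker, map_sub, ← Module.End.mul_apply, hε, sub_self]
        exact Submodule.mem_sup.mpr ⟨ε y, ⟨y, rfl⟩, y - ε y, hker', by abel⟩
    rcases (hind j).2 _ _ hcompl with h | h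
    · exfalso
      have h1 : (⟨x, hxm⟩ : ↥(𝕄 j)) ∈ LinearMap.range ε :=
        hess.1 (LinearMap.mem_ker.mpr hker)
      rw [h, Submodule.mem_bot] at h1
      exact hx0 (congrArg Subtype.val h1)
    · have htop : LinearMap.range ε = ⊤ := by
        rw [eq_top_iff]
        intro y _
        have h2 : y - ε y ∈ LinearMap.ker ε := by
          rw [LinearMap.mem_ker, map_sub, ← Module.End.mul_apply, hε, sub_self]
        rw [h, Submodule.mem_bot, sub_eq_zero] at h2
        exact ⟨y, h2.symm⟩
      rw [htop] at hess
      intro s hs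
      have hle : socIn (𝕄 j) ≤ LinearMap.ker (π j ∘ₗ φ) := by
        refine sSup_le ?_
        rintro T ⟨hTle, hTs⟩ t ht
        have hT' : IsSimpleModule R ↥(Submodule.comap (𝕄 j).subtype T) := by
          haveI := hTs
          exact IsSimpleModule.congr (Submodule.comapSubtypeEquivOfLe hTle)
        have hatomT' : IsAtom (Submodule.comap (𝕄 j).subtype T) :=
          isSimpleModule_iff_isAtom.mp hT'
        have hTker : Submodule.comap (𝕄 j).subtype T ≤ LinearMap.ker ψj := by
          rcases eq_or_lt_of_le
            (inf_le_right : LinearMap.ker ψj ⊓ Submodule.comap (𝕄 j).subtype T ≤ _)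
            with heq | hlt
          · exact inf_eq_right.mp heq
          · exact absurd (hess.2 _ le_top (hatomT'.2 _ hlt)) hatomT'.1
        have htm : t ∈ 𝕄 j := hTle ht
        have h3 : ψj ⟨t, htm⟩ = 0 :=
          hTker (show (⟨t, htm⟩ : ↥(𝕄 j)) ∈ Submodule.comap (𝕄 j).subtype T from ht)
        have h4 := congrArg Subtype.val h3
        rw [LinearMap.mem_ker, LinearMap.comp_apply]
        exact h4
      simpa using hle hs
  have key : ∀ t : M, (∀ i, π i t ∈ socIn (𝕄 i)) → ∀ j,
      π j (φ t) = π j (φ (π j t)) := by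
    intro t ht j
    conv_lhs => rw [← hsum t]
    rw [map_sum, map_sum, Finset.sum_eq_single j]
    · intro i _ hij
      exact f1 i j hij (π i t) (ht i)
    · intro h; exact absurd (Finset.mem_univ j) h
  have keyS : ∀ t : M, (∀ i, π i t ∈ socIn (𝕄 i)) → ∀ j ∈ S, π j (φ t) = 0 := by
    intro t ht j hj
    rw [key t ht j]
    exact f2 j hj (π j t) (ht j)

  set Sc : Finset (Fin n) := Finset.univ.filter (fun j => j ∉ S) with hSc
  have hmemSc : ∀ j, j ∈ Sc ↔ j ∉ S := by intro j; simp [hSc]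
  set N : Submodule R M := ⨆ j ∈ Sc, 𝕄 j with hN
  have hMN : ∀ j ∈ Sc, 𝕄 j ≤ N := fun j hj => le_biSup _ hj
  set πN : Module.End R M := ∑ j ∈ Sc, π j with hπN
  have hπNapp : ∀ x : M, πN x = ∑ j ∈ Sc, π j x := by
    intro x; rw [hπN]; simp
  have hπNmem : ∀ x : M, πN x ∈ N := by
    intro x
    rw [hπNapp]
    exact Submodule.sum_mem _ (fun j hj => hMN j hj (hmem j x))
  have hzero : ∀ j, j ∈ S → ∀ y ∈ N, π j y = 0 := by
    intro j hj y hy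
    have hle : N ≤ LinearMap.ker (π j) := by
      rw [hN]
      refine iSup₂_le fun k hk => ?_
      intro z hz
      have hkj : k ≠ j := by
        intro h; rw [h] at hk; exact (hmemSc j).mp hk hj
      exact LinearMap.mem_ker.mpr (hne k j hkj z hz)
    exact LinearMap.mem_ker.mp (hle hy)
  have hπNy : ∀ y ∈ N, πN y = y := by
    intro y hy
    rw [hπNapp, Finset.sum_subset (Finset.subset_univ Sc)]
    · exact hsum y
    · intro j _ hj
      have hjS : j ∈ S := by
        by_contra hjs; exact hj ((hmemSc j).mpr hjs)
      exact hzero j hjS y hy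
  have hπNj : ∀ j ∈ Sc, ∀ z : M, π j (πN z) = π j z := by
    intro j hj z
    calc π j (πN z) = ∑ k ∈ Sc, π j (π k z) := by rw [hπNapp, map_sum]
      _ = π j (π j z) :=
        Finset.sum_eq_single j (fun k _ hkj => hpq k j hkj z) (fun h => absurd hj h)
      _ = π j z := hpp j z
  set β : M →ₗ[R] ↥N := LinearMap.codRestrict N (πN ∘ₗ φ) (fun x => hπNmem (φ x)) with hβ
  set ψ : Module.End R ↥N := β ∘ₗ N.subtype with hψ
  have hβc : ∀ x : M, ((β x : ↥N) : M) = πN (φ x) := by intro x; simp [hβ]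
  have hψc : ∀ y : ↥N, ((ψ y : ↥N) : M) = πN (φ ↑y) := by intro y; simp [hψ, hβ]
  haveI hAtomic : IsAtomic (Submodule R M) :=
    isAtomic_of_orderBot_wellFounded_lt wellFounded_lt
  haveI hAtomicN : IsAtomic (Submodule R ↥N) :=
    isAtomic_of_orderBot_wellFounded_lt wellFounded_lt
  have hψinj : Function.Injective ψ := by
    rw [← LinearMap.ker_eq_bot]
    rcases eq_bot_or_exists_atom_le (LinearMap.ker ψ) with hk | ⟨T', hT', hT'le⟩
    · exact hk
    · exfalso
      set T : Submodule R M := Submodule.map N.subtype T' with hT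
      have hTsimple : IsSimpleModule R ↥T := by
        haveI : IsSimpleModule R ↥T' := isSimpleModule_iff_isAtom.mpr hT'
        exact IsSimpleModule.congr
          (Submodule.equivMapOfInjective N.subtype (Submodule.injective_subtype N) T').symm
      have hbot : T' = ⊥ := by
        rw [eq_bot_iff]
        intro u hu
        have htN : (u : M) ∈ N := u.2
        have hker : πN (φ ↑u) = 0 := by
          have h5 : ψ u = 0 := hT'le hu
          rw [← hψc u, h5]
          rfl
        have hcomp : ∀ i, π i (u : M) ∈ socIn (𝕄 i) :=
          hatom T hTsimple (u : M) (Submodule.mem_map_of_mem hu)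
        have hu0 : (u : M) = 0 := by
          rw [← hsum (u : M)]
          apply Finset.sum_eq_zero
          intro j _
          by_cases hj : j ∈ S
          · exact hzero j hj (u : M) htN
          · have hjc : j ∈ Sc := (hmemSc j).mpr hj
            have h6 : π j (φ ↑u) = 0 := by
              rw [← hπNj j hjc (φ ↑u), hker, map_zero]
            rw [key (u : M) hcomp j] at h6
            by_contra h7
            exact hj ⟨π j (u : M), hmem j (u : M), h7, h6⟩
        exact (Submodule.mem_bot R).mpr (Subtype.ext hu0)
      exact hT'.1 hbot
  have hψsurj : Function.Surjective ψ :=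
    IsArtinian.surjective_of_injective_endomorphism ψ hψinj
  set Ψ : ↥N ≃ₗ[R] ↥N := LinearEquiv.ofBijective ψ ⟨hψinj, hψsurj⟩ with hΨ
  set e : Module.End R M := N.subtype ∘ₗ (Ψ.symm : ↥N →ₗ[R] ↥N) ∘ₗ β with he
  have heval : ∀ x : M, e x = ↑(Ψ.symm (β x)) := fun x => rfl
  have hβe : ∀ x : M, β (e x) = β x := by
    intro x
    have h1 : β (e x) = ψ (Ψ.symm (β x)) := rfl
    have h2 : ψ (Ψ.symm (β x)) = Ψ (Ψ.symm (β x)) := rfl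
    rw [h1, h2, Ψ.apply_symm_apply]
  have hidem : IsIdempotentElem e := by
    rw [IsIdempotentElem]
    ext x
    rw [Module.End.mul_apply, heval (e x), hβe x, ← heval x]
  have hex0 : ∀ x : M, e x = 0 ↔ πN (φ x) = 0 := by
    intro x
    constructor
    · intro h
      have h1 : (↑(Ψ.symm (β x)) : M) = 0 := by rw [← heval]; exact h
      have h2 : Ψ.symm (β x) = 0 := Subtype.ext (by simpa using h1)
      have h3 : β x = 0 := by
        have h4 := congrArg Ψ h2
        rwa [Ψ.apply_symm_apply, map_zero] at h4
      rw [← hβc x, h3]; rfl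
    · intro h
      have h3 : β x = 0 := Subtype.ext (by rw [hβc]; simpa using h)
      rw [heval, h3, map_zero]; rfl
  have hrange : ∀ x : M, x ∈ LinearMap.range (1 - e) ↔ e x = 0 := by
    intro x
    constructor
    · rintro ⟨y, rfl⟩
      have h1 : (1 - e) y = y - e y := by simp [LinearMap.sub_apply]
      rw [h1, map_sub]
      have h2 : e (e y) = e y := by rw [heval (e y), hβe y, ← heval y]
      rw [h2, sub_self]
    · intro h
      exact ⟨x, by simp [LinearMap.sub_apply, h]⟩
  refine ⟨1 - e, hidem.one_sub, ?_, ?_⟩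
  · intro x hx
    rw [LinearMap.mem_ker] at hx
    rw [hrange x, hex0 x, hx, map_zero]
  · intro K hK hKint
    rcases eq_bot_or_exists_atom_le K with h | ⟨T, hT, hTK⟩
    · exact h
    · exfalso
      have hTker : T ≤ LinearMap.ker φ := by
        intro t ht
        have htK : t ∈ K := hTK ht
        have hNzero : πN (φ t) = 0 := (hex0 t).mp ((hrange t).mp (hK htK))
        have hcomp : ∀ i, π i t ∈ socIn (𝕄 i) :=
          hatom T (isSimpleModule_iff_isAtom.mpr hT) t ht
        rw [LinearMap.mem_ker, ← hsum (φ t)]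
        apply Finset.sum_eq_zero
        intro j _
        by_cases hj : j ∈ S
        · exact keyS t hcomp j hj
        · rw [← hπNj j ((hmemSc j).mpr hj) (φ t), hNzero, map_zero]
      have hTbot : T = ⊥ := by
        rw [eq_bot_iff, ← hKint]
        exact le_inf hTker hTK
      exact hT.1 hTbot




end CSRickartPaper
end
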